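/- arXiv:1302.0721 — 2 statements merged into one kernel-verified Lean document; each statement's English description precedes it below -/
import Mathlib

section
/- The packing chromatic number of the distance graph D(4,7) is at least 16. -/
/-- The infinite distance graph `D(k,t)` on vertex set `ℤ`: distinct `i, j` are
adjacent iff `|i - j| ∈ {k, t}`. -/
def distGraph (k t : ℕ) : SimpleGraph ℤ where
  Adj i j := i ≠ j ∧ ((i - j).natAbs = k ∨ (i - j).natAbs = t)
  symm := by
    constructor
    rintro i j ⟨hne, hd⟩
    refine ⟨hne.symm, ?_⟩
    rwa [show j - i = -(i - j) by ring, Int.natAbs_neg]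
  loopless := by constructor; rintro i ⟨hne, -⟩; exact hne rfl

/-- `c` is a packing `p`-coloring of `G`: each vertex gets a color in `{1, …, p}`,
and any two distinct vertices with the same color `c` are at distance greater
than `c` (in particular, unreachable pairs have infinite distance). -/
def IsPackingColoring {V : Type*} (G : SimpleGraph V) (p : ℕ) (c : V → ℕ) : Prop :=
  (∀ v, 1 ≤ c v ∧ c v ≤ p) ∧
  ∀ u v : V, u ≠ v → c u = c v → (c u : ℕ∞) < G.edist u v

/-- The packing chromatic number of `G`: the smallest `p` (as an element of `ℕ∞`,
being `⊤` if no finite packing coloring exists) admitting a packing `p`-coloring. -/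
noncomputable def packingChromaticNumber {V : Type*} (G : SimpleGraph V) : ℕ∞ :=
  sInf {q : ℕ∞ | ∃ p : ℕ, q = p ∧ ∃ c : V → ℕ, IsPackingColoring G p c}

namespace PD47

lemma step_adj (u d : ℤ) (hd : d.natAbs = 4 ∨ d.natAbs = 7) :
    (distGraph 4 7).Adj u (u + d) := by
  have hd0 : d ≠ 0 := by rcases hd with h | h <;> (intro h0; rw [h0] at h; simp at h)
  refine ⟨fun h => hd0 (by omega), ?_⟩
  rwa [show u - (u + d) = -d by ring, Int.natAbs_neg]

lemma edist_step (u d : ℤ) (hd : d.natAbs = 4 ∨ d.natAbs = 7) :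
    (distGraph 4 7).edist u (u + d) ≤ 1 := by
  simpa using SimpleGraph.edist_le (step_adj u d hd).toWalk

lemma edist_nsmul (u d : ℤ) (hd : d.natAbs = 4 ∨ d.natAbs = 7) :
    ∀ m : ℕ, (distGraph 4 7).edist u (u + m * d) ≤ (m : ℕ∞) := by
  intro m
  induction m with
  | zero => simp
  | succ n ih =>
    have h2 := edist_step (u + n * d) d hd
    have ht := SimpleGraph.edist_triangle (G := distGraph 4 7)
      (u := u) (v := u + n * d) (w := u + n * d + d)
    have heq : u + ((n : ℤ) + 1) * d = u + n * d + d := by ring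
    calc (distGraph 4 7).edist u (u + (↑(n+1)) * d)
        = (distGraph 4 7).edist u (u + n * d + d) := by push_cast; rw [heq]
      _ ≤ _ := ht
      _ ≤ (n : ℕ∞) + 1 := add_le_add ih h2
      _ = ((n+1 : ℕ) : ℕ∞) := by push_cast; rfl

lemma edist_zsmul (u d : ℤ) (hd : d.natAbs = 4 ∨ d.natAbs = 7) (x : ℤ) :
    (distGraph 4 7).edist u (u + x * d) ≤ (x.natAbs : ℕ∞) := by
  rcases Int.natAbs_eq x with h | h
  · obtain ⟨m, hm⟩ : ∃ m : ℕ, x = (m : ℤ) := ⟨x.natAbs, h⟩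
    have hmm : x.natAbs = m := by omega
    subst hm; rw [hmm]
    exact edist_nsmul u d hd m
  · have hneg : (-d).natAbs = 4 ∨ (-d).natAbs = 7 := by rwa [Int.natAbs_neg]
    obtain ⟨m, hm⟩ : ∃ m : ℕ, x = -(m : ℤ) := ⟨x.natAbs, h⟩
    have hmm : x.natAbs = m := by omega
    subst hm; rw [hmm, show u + -(m:ℤ) * d = u + (m:ℤ) * (-d) by ring]
    exact edist_nsmul u (-d) hneg m

lemma edist_rep (u x y : ℤ) :
    (distGraph 4 7).edist u (u + (4 * x + 7 * y)) ≤ ((x.natAbs + y.natAbs : ℕ) : ℕ∞) := by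
  have h1 := edist_zsmul u 4 (by left; rfl) x
  have h2 := edist_zsmul (u + x * 4) 7 (by right; rfl) y
  have ht := SimpleGraph.edist_triangle (G := distGraph 4 7)
    (u := u) (v := u + x * 4) (w := u + x * 4 + y * 7)
  rw [show u + (4 * x + 7 * y) = u + x * 4 + y * 7 by ring]
  push_cast
  exact le_trans ht (add_le_add h1 h2)

def Conf (g k : ℕ) : Prop := ∃ x y : ℤ, 4 * x + 7 * y = (g : ℤ) ∧ x.natAbs + y.natAbs ≤ k

def Pack (c : ℤ → ℕ) : Prop :=
  ∀ u v : ℤ, u ≠ v → c u = c v → (c u : ℕ∞) < (distGraph 4 7).edist u v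

lemma no_conf {c : ℤ → ℕ} (hp : Pack c) {a b : ℕ} (hab : a < b) (hcc : c a = c b)
    (hk : Conf (b - a) (c a)) : False := by
  obtain ⟨x, y, hxy, hle⟩ := hk
  have hna : (a : ℤ) ≠ (b : ℤ) := by exact_mod_cast Nat.ne_of_lt hab
  have hb : (b : ℤ) = (a : ℤ) + (4 * x + 7 * y) := by rw [hxy]; omega
  have h1 : (distGraph 4 7).edist a b ≤ ((x.natAbs + y.natAbs : ℕ) : ℕ∞) := by
    rw [hb]; exact edist_rep a x y
  have h2 := hp a b hna hcc
  have h3 : ((x.natAbs + y.natAbs : ℕ) : ℕ∞) ≤ (c (a : ℤ) : ℕ∞) := by exact_mod_cast hle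
  exact absurd (lt_of_lt_of_le h2 (le_trans h1 h3)) (lt_irrefl _)

def cnds (n : ℕ) : List (ℤ × ℤ) :=
  let r : ℤ := (n : ℤ) % 7
  let q : ℤ := (n : ℤ) / 7
  [(2 * r, q - r), (2 * r - 7, q - r + 4), (2 * r - 14, q - r + 8)]

def dok (n k : ℕ) : Bool :=
  (cnds n).any (fun p => 4 * p.1 + 7 * p.2 == (n : ℤ) && p.1.natAbs + p.2.natAbs ≤ k)

lemma dok_conf {n k : ℕ} (h : dok n k = true) : Conf n k := by
  rw [dok, List.any_eq_true] at h
  obtain ⟨p, _, hp⟩ := h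
  rw [Bool.and_eq_true, beq_iff_eq, decide_eq_true_eq] at hp
  exact ⟨p.1, p.2, hp.1, hp.2⟩

def dcap (n : ℕ) : ℕ := if n ≤ 26 then 5 else (n + 15) / 7

lemma factHigh : ∀ g ∈ Finset.Icc 1 96, dok g (dcap g) = true := by decide

lemma fact3 : ∀ g1 ∈ Finset.Icc 1 17, ∀ g2 ∈ Finset.Icc 1 17,
    g1 + g2 ≤ 18 → (dok g1 3 || dok g2 3 || dok (g1 + g2) 3) = true := by decide

lemma fact4 : ∀ g1 ∈ Finset.Icc 1 24, ∀ g2 ∈ Finset.Icc 1 24,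
    g1 + g2 ≤ 25 → (dok g1 4 || dok g2 4 || dok (g1 + g2) 4) = true := by decide

lemma conf_mono {g k k' : ℕ} (h : Conf g k) (hk : k ≤ k') : Conf g k' := by
  obtain ⟨x, y, h1, h2⟩ := h; exact ⟨x, y, h1, le_trans h2 hk⟩

lemma confHigh {g k : ℕ} (hg1 : 1 ≤ g) (hk5 : 5 ≤ k) (hg : g ≤ 7 * k - 9) (hk15 : k ≤ 15) :
    Conf g k := by
  have hg96 : g ≤ 96 := by omega
  have h := dok_conf (factHigh g (Finset.mem_Icc.2 ⟨hg1, hg96⟩))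
  refine conf_mono h ?_
  rw [dcap]
  split
  · exact hk5
  · have : g + 15 ≤ 7 * k + 6 := by omega
    calc (g + 15) / 7 ≤ (7 * k + 6) / 7 := Nat.div_le_div_right this
      _ = k := by omega

-- ===== automaton for colors 1 and 2 =====

def stepA (s ch : ℕ) : ℕ :=
  (s % 128 / 2 ||| (if ch = 1 then 72 else 0)) +
    128 * (s / 128 / 2 ||| (if ch = 2 then 9420 else 0))

def gainA (ch : ℕ) : ℕ := if ch = 0 then 0 else 1

inductive NT where
  | lf : NT
  | nd (l : NT) (k v : ℕ) (r : NT) : NT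

def NT.find : NT → ℕ → Option ℕ
  | .lf, _ => none
  | .nd l k v r, x => if x < k then l.find x else if k < x then r.find x else some v

def chk1 (root : NT) (s v ch : ℕ) : Bool :=
  match root.find (stepA s ch) with
  | some w => gainA ch * 22 + w ≤ 13 + v
  | none => false

def chkE (root : NT) (s v : ℕ) : Bool :=
  chk1 root s v 0 && (s % 2 == 1 || chk1 root s v 1) && (s / 128 % 2 == 1 || chk1 root s v 2)

def chkT (root : NT) : NT → Bool
  | .lf => true
  | .nd l k v r => chkE root k v && chkT root l && chkT root r

lemma chkT_sound {root : NT} : ∀ {t : NT}, chkT root t = true →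
    ∀ {x v : ℕ}, t.find x = some v → chkE root x v = true := by
  intro t
  induction t with
  | lf => intro _ x v h; simp [NT.find] at h
  | nd l k w r ihl ihr =>
    intro h x v hf
    rw [chkT, Bool.and_eq_true, Bool.and_eq_true] at h
    rw [NT.find] at hf
    split at hf
    · exact ihl h.1.2 hf
    · split at hf
      · exact ihr h.2 hf
      · next h1 h2 =>
          have hxk : x = k := by omega
          subst hxk; cases hf; exact h.1.1

def runA (col : ℕ → ℕ) : ℕ → ℕ
  | 0 => 0
  | n + 1 => stepA (runA col n) (col n)

def cntA (col : ℕ → ℕ) : ℕ → ℕ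
  | 0 => 0
  | n + 1 => cntA col n + gainA (col n)

lemma lor_lt_128 {a b : ℕ} (ha : a < 128) (hb : b < 128) : a ||| b < 128 := by
  have h : ∀ i, i ≥ 7 → (a ||| b).testBit i = false := by
    intro i hi
    have h2 : (128 : ℕ) ≤ 2 ^ i :=
      le_trans (by norm_num : (128:ℕ) ≤ 2 ^ 7) (Nat.pow_le_pow_right (by norm_num) hi)
    rw [Nat.testBit_lor, Nat.testBit_eq_false_of_lt (lt_of_lt_of_le ha h2),
      Nat.testBit_eq_false_of_lt (lt_of_lt_of_le hb h2)]
    rfl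
  have := Nat.lt_pow_two_of_testBit (a ||| b) h
  simpa using this

lemma stepA_mod (s ch : ℕ) :
    stepA s ch % 128 = s % 128 / 2 ||| (if ch = 1 then 72 else 0) := by
  have h1 : s % 128 / 2 ||| (if ch = 1 then 72 else 0) < 128 :=
    lor_lt_128 (by omega) (by split <;> norm_num)
  rw [stepA, Nat.add_mul_mod_self_left, Nat.mod_eq_of_lt h1]

lemma stepA_div (s ch : ℕ) :
    stepA s ch / 128 = s / 128 / 2 ||| (if ch = 2 then 9420 else 0) := by
  have h1 : s % 128 / 2 ||| (if ch = 1 then 72 else 0) < 128 :=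
    lor_lt_128 (by omega) (by split <;> norm_num)
  rw [stepA, Nat.add_mul_div_left _ _ (by norm_num : (0:ℕ) < 128),
    Nat.div_eq_of_lt h1, Nat.zero_add]

lemma inv1 (col : ℕ → ℕ) : ∀ n t, (runA col n % 128).testBit t = true →
    ∃ m, m < n ∧ col m = 1 ∧ (m + 4 = n + t ∨ m + 7 = n + t) := by
  intro n
  induction n with
  | zero => intro t h; simp [runA] at h
  | succ n ih =>
    intro t h
    rw [runA, stepA_mod, Nat.testBit_lor, Bool.or_eq_true] at h
    rcases h with h | h
    · rw [Nat.testBit_div_two] at h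
      obtain ⟨m, hm, hc, hd⟩ := ih (t + 1) h
      exact ⟨m, by omega, hc, by omega⟩
    · by_cases hch : col n = 1
      · rw [if_pos hch] at h
        have ht7 : t < 7 := by
          by_contra hge
          have h2 : (72 : ℕ) < 2 ^ t :=
            lt_of_lt_of_le (by norm_num : (72:ℕ) < 2 ^ 7)
              (Nat.pow_le_pow_right (by norm_num) (by omega))
          rw [Nat.testBit_eq_false_of_lt h2] at h
          exact Bool.false_ne_true h
        interval_cases t <;>
          first
            | exact absurd h (by decide)
            | exact ⟨n, Nat.lt_succ_self n, hch, by omega⟩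
      · rw [if_neg hch] at h; simp at h

lemma inv2 (col : ℕ → ℕ) : ∀ n t, (runA col n / 128).testBit t = true →
    ∃ m, m < n ∧ col m = 2 ∧ (m + 3 = n + t ∨ m + 4 = n + t ∨ m + 7 = n + t ∨
      m + 8 = n + t ∨ m + 11 = n + t ∨ m + 14 = n + t) := by
  intro n
  induction n with
  | zero => intro t h; simp [runA] at h
  | succ n ih =>
    intro t h
    rw [runA, stepA_div, Nat.testBit_lor, Bool.or_eq_true] at h
    rcases h with h | h
    · rw [Nat.testBit_div_two] at h
      obtain ⟨m, hm, hc, hd⟩ := ih (t + 1) h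
      exact ⟨m, by omega, hc, by omega⟩
    · by_cases hch : col n = 2
      · rw [if_pos hch] at h
        have ht14 : t < 14 := by
          by_contra hge
          have h2 : (9420 : ℕ) < 2 ^ t :=
            lt_of_lt_of_le (by norm_num : (9420:ℕ) < 2 ^ 14)
              (Nat.pow_le_pow_right (by norm_num) (by omega))
          rw [Nat.testBit_eq_false_of_lt h2] at h
          exact Bool.false_ne_true h
        interval_cases t <;>
          first
            | exact absurd h (by decide)
            | exact ⟨n, Nat.lt_succ_self n, hch, by omega⟩
      · rw [if_neg hch] at h; simp at h

lemma run_bound (col : ℕ → ℕ) (tree : NT)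
    (hcol : ∀ n, col n = 0 ∨ col n = 1 ∨ col n = 2)
    (hall1 : ∀ n, col n = 1 → runA col n % 2 = 0)
    (hall2 : ∀ n, col n = 2 → runA col n / 128 % 2 = 0)
    (hchk : chkT tree tree = true)
    (hinit : tree.find 0 = some 63) :
    ∀ n, ∃ v, tree.find (runA col n) = some v ∧ 22 * cntA col n + v ≤ 13 * n + 63 := by
  intro n
  induction n with
  | zero => exact ⟨63, hinit, by simp [cntA]⟩
  | succ n ih =>
    obtain ⟨v, hf, hle⟩ := ih
    have hE := chkT_sound hchk hf
    rw [chkE, Bool.and_eq_true, Bool.and_eq_true] at hE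
    have hget : chk1 tree (runA col n) v (col n) = true := by
      rcases hcol n with h0 | h1 | h2
      · rw [h0]; exact hE.1.1
      · rw [h1]
        rcases (Bool.or_eq_true _ _).mp hE.1.2 with hb | hb
        · exfalso
          have := hall1 n h1
          rw [beq_iff_eq] at hb
          omega
        · exact hb
      · rw [h2]
        rcases (Bool.or_eq_true _ _).mp hE.2 with hb | hb
        · exfalso
          have := hall2 n h2
          rw [beq_iff_eq] at hb
          omega
        · exact hb
    cases hfind : tree.find (stepA (runA col n) (col n)) with
    | none => rw [chk1, hfind] at hget; exact absurd hget (by simp)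
    | some w =>
      rw [chk1, hfind] at hget
      have hw : gainA (col n) * 22 + w ≤ 13 + v := by
        simpa using hget
      refine ⟨w, by rw [runA]; exact hfind, ?_⟩
      rw [cntA]
      generalize gainA (col n) = g at hw ⊢
      omega

lemma cnt_card (col : ℕ → ℕ) : ∀ n,
    cntA col n = ((Finset.range n).filter (fun m => col m ≠ 0)).card := by
  intro n
  induction n with
  | zero => simp [cntA]
  | succ n ih =>
    rw [cntA, ih, Finset.range_add_one, Finset.filter_insert]
    by_cases h : col n = 0
    · rw [if_neg (by simpa using h), gainA, if_pos h, Nat.add_zero]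
    · rw [if_pos h, Finset.card_insert_of_notMem (by simp), gainA, if_neg h]

lemma block_count {N ℓ m B : ℕ} (hl : 0 < ℓ) (S : Finset ℕ) (hS : ∀ x ∈ S, x < N)
    (hB : N ≤ B * ℓ)
    (h : ∀ a : ℕ, (S.filter (fun x => a * ℓ ≤ x ∧ x < a * ℓ + ℓ)).card ≤ m) :
    S.card ≤ B * m := by
  have hsub : S ⊆ (Finset.range B).biUnion
      (fun i => S.filter (fun x => i * ℓ ≤ x ∧ x < i * ℓ + ℓ)) := by
    intro x hx
    rw [Finset.mem_biUnion]
    have hmod : x % ℓ < ℓ := Nat.mod_lt x hl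
    have hdm : ℓ * (x / ℓ) + x % ℓ = x := Nat.div_add_mod x ℓ
    refine ⟨x / ℓ, ?_, ?_⟩
    · rw [Finset.mem_range]
      by_contra hge
      push_neg at hge
      have h1 : B * ℓ ≤ x / ℓ * ℓ := Nat.mul_le_mul_right ℓ hge
      have h2 : x / ℓ * ℓ ≤ x := Nat.div_mul_le_self x ℓ
      have h3 := hS x hx
      omega
    · rw [Finset.mem_filter]
      refine ⟨hx, Nat.div_mul_le_self x ℓ, ?_⟩
      calc x = ℓ * (x / ℓ) + x % ℓ := hdm.symm
        _ < ℓ * (x / ℓ) + ℓ := Nat.add_lt_add_left hmod _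
        _ = x / ℓ * ℓ + ℓ := by ring
  calc S.card ≤ _ := Finset.card_le_card hsub
    _ ≤ ∑ i ∈ Finset.range B,
        (S.filter (fun x => i * ℓ ≤ x ∧ x < i * ℓ + ℓ)).card := Finset.card_biUnion_le
    _ ≤ ∑ _i ∈ Finset.range B, m := Finset.sum_le_sum (fun i _ => h i)
    _ = B * m := by simp [Finset.sum_const, Finset.card_range]

lemma pair_no {c : ℤ → ℕ} (hp : Pack c) {k : ℕ} {x y : ℕ} (hx : c x = k) (hy : c y = k)
    (hxy : x < y) (hk : Conf (y - x) k) : False :=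
  no_conf hp hxy (by rw [hx, hy]) (by rwa [hx])

lemma window_one {c : ℤ → ℕ} (hp : Pack c) {k : ℕ} (T : Finset ℕ)
    (hT : ∀ x ∈ T, c x = k) (lo ℓ : ℕ) (hrange : ∀ x ∈ T, lo ≤ x ∧ x < lo + ℓ)
    (hconf : ∀ g, 1 ≤ g → g ≤ ℓ - 1 → Conf g k) : T.card ≤ 1 := by
  by_contra hgt
  push_neg at hgt
  obtain ⟨a, ha, b, hb, hab⟩ := Finset.one_lt_card.mp hgt
  have hra := hrange a ha
  have hrb := hrange b hb
  rcases Nat.lt_or_ge a b with h | h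
  · exact pair_no hp (hT a ha) (hT b hb) h (hconf _ (by omega) (by omega))
  · have h' : b < a := by omega
    exact pair_no hp (hT b hb) (hT a ha) h' (hconf _ (by omega) (by omega))

lemma tri_no {c : ℤ → ℕ} (hp : Pack c) {k L : ℕ} {x y z : ℕ}
    (hx : c x = k) (hy : c y = k) (hz : c z = k) (h1 : x < y) (h2 : y < z)
    (hL : z - x ≤ L)
    (hconf3 : ∀ g1 g2, 1 ≤ g1 → 1 ≤ g2 → g1 + g2 ≤ L →
      Conf g1 k ∨ Conf g2 k ∨ Conf (g1 + g2) k) : False := by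
  rcases hconf3 (y - x) (z - y) (by omega) (by omega) (by omega) with h | h | h
  · exact pair_no hp hx hy h1 h
  · exact pair_no hp hy hz h2 h
  · refine pair_no hp hx hz (by omega) ?_
    rwa [show z - x = (y - x) + (z - y) by omega]

lemma window_two {c : ℤ → ℕ} (hp : Pack c) {k : ℕ} (T : Finset ℕ)
    (hT : ∀ x ∈ T, c x = k) (lo ℓ : ℕ) (hrange : ∀ x ∈ T, lo ≤ x ∧ x < lo + ℓ)
    (hconf3 : ∀ g1 g2, 1 ≤ g1 → 1 ≤ g2 → g1 + g2 ≤ ℓ - 1 →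
      Conf g1 k ∨ Conf g2 k ∨ Conf (g1 + g2) k) : T.card ≤ 2 := by
  by_contra hgt
  push_neg at hgt
  obtain ⟨a, ha, b, hb, d, hd, hab, had, hbd⟩ := Finset.two_lt_card.mp hgt
  have hra := hrange a ha
  have hrb := hrange b hb
  have hrd := hrange d hd
  have key : ∀ x y z : ℕ, x ∈ T → y ∈ T → z ∈ T → x < y → y < z → False := by
    intro x y z hxT hyT hzT hxy hyz
    have hrx := hrange x hxT
    have hrz := hrange z hzT
    exact tri_no hp (hT x hxT) (hT y hyT) (hT z hzT) hxy hyz (by omega) hconf3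
  rcases Nat.lt_trichotomy a b with h1 | h1 | h1
  · rcases Nat.lt_trichotomy b d with h2 | h2 | h2
    · exact key a b d ha hb hd h1 h2
    · exact hbd h2
    · rcases Nat.lt_trichotomy a d with h3 | h3 | h3
      · exact key a d b ha hd hb h3 h2
      · exact had h3
      · exact key d a b hd ha hb h3 h1
  · exact hab h1
  · rcases Nat.lt_trichotomy a d with h2 | h2 | h2
    · exact key b a d hb ha hd h1 h2
    · exact had h2
    · rcases Nat.lt_trichotomy b d with h3 | h3 | h3
      · exact key b d a hb hd ha h3 h2
      · exact hbd h3
      · exact key d b a hd hb ha h3 h1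

def theTree : NT :=
(.nd (.nd (.nd (.nd (.nd (.nd (.nd (.nd (.nd (.nd .lf 0 63 (.nd .lf 1 63 .lf)) 2 63 (.nd (.nd .lf 3 63 .lf) 4 63 (.nd .lf 5 63 .lf))) 6 63 (.nd (.nd .lf 7 63 (.nd .lf 9 50 .lf)) 11 50 (.nd (.nd .lf 13 50 .lf) 15 50 (.nd .lf 18 59 .lf)))) 22 59 (.nd (.nd (.nd .lf 27 37 (.nd .lf 31 37 .lf)) 36 51 (.nd (.nd .lf 37 46 .lf) 45 46 (.nd .lf 54 46 .lf))) 63 27 (.nd (.nd (.nd .lf 72 54 .lf) 73 50 (.nd .lf 74 50 .lf)) 75 50 (.nd (.nd .lf 90 42 .lf) 91 37 (.nd .lf 108 45 .lf))))) 109 33 (.nd (.nd (.nd (.nd .lf 126 36 (.nd .lf 127 27 .lf)) 128 63 (.nd (.nd .lf 129 50 .lf) 130 59 (.nd .lf 131 50 .lf))) 132 59 (.nd (.nd (.nd .lf 133 50 .lf) 134 59 (.nd .lf 135 50 .lf)) 137 50 (.nd (.nd .lf 139 50 .lf) 141 50 (.nd .lf 143 50 .lf)))) 146 59 (.nd (.nd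 (.nd .lf 150 59 (.nd .lf 155 37 .lf)) 159 37 (.nd (.nd .lf 164 51 .lf) 165 46 (.nd .lf 173 46 .lf))) 182 46 (.nd (.nd (.nd .lf 191 24 .lf) 200 54 (.nd .lf 201 38 .lf)) 202 42 (.nd (.nd .lf 203 33 .lf) 218 42 (.nd .lf 219 33 .lf)))))) 236 45 (.nd (.nd (.nd (.nd (.nd .lf 237 33 (.nd .lf 254 36 .lf)) 255 14 (.nd (.nd .lf 256 63 .lf) 257 63 (.nd .lf 258 47 .lf))) 259 43 (.nd (.nd .lf 260 51 (.nd .lf 261 46 .lf)) 262 42 (.nd (.nd .lf 263 41 .lf) 265 50 (.nd .lf 267 37 .lf)))) 269 46 (.nd (.nd (.nd .lf 271 37 (.nd .lf 274 47 .lf)) 278 42 (.nd (.nd .lf 283 37 .lf) 287 37 (.nd .lf 292 51 .lf))) 293 46 (.nd (.nd (.nd .lf 301 46 .lf) 310 42 (.nd .lf 319 24 .lf)) 328 54 (.nd (.nd .lf 329 50 .lf) 330 42 (.nd .lf 331 33 .lf))))) 346 42 (.nd (.nd (.nd (.nd .lf 347 33 (.nd .lf 364 45 .lf)) 365 33 (.nd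 (.nd .lf 382 23 .lf) 383 11 (.nd .lf 384 63 .lf))) 385 50 (.nd (.nd (.nd .lf 386 47 .lf) 387 37 (.nd .lf 388 51 .lf)) 389 46 (.nd (.nd .lf 390 42 .lf) 391 37 (.nd .lf 393 46 .lf)))) 395 37 (.nd (.nd (.nd .lf 397 46 (.nd .lf 399 37 .lf)) 402 47 (.nd (.nd .lf 406 42 .lf) 411 37 (.nd .lf 415 37 .lf))) 420 51 (.nd (.nd (.nd .lf 421 46 .lf) 429 46 (.nd .lf 438 42 .lf)) 447 24 (.nd (.nd .lf 456 54 .lf) 457 38 (.nd .lf 458 42 .lf))))))) 459 33 (.nd (.nd (.nd (.nd (.nd (.nd .lf 474 42 (.nd .lf 475 33 .lf)) 492 45 (.nd (.nd .lf 493 33 .lf) 510 23 (.nd .lf 511 11 .lf))) 512 63 (.nd (.nd .lf 513 63 (.nd .lf 514 63 .lf)) 515 63 (.nd (.nd .lf 516 51 .lf) 517 41 (.nd .lf 518 42 .lf)))) 519 41 (.nd (.nd (.nd .lf 521 50 (.nd .lf 523 50 .lf)) 525 33 (.nd (.nd .lf 527 28 .lf) 530 59 (.nd .lf 534 42 .lf)))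 539 37 (.nd (.nd (.nd .lf 543 24 .lf) 548 51 (.nd .lf 549 41 .lf)) 557 33 (.nd (.nd .lf 566 42 .lf) 575 24 (.nd .lf 584 54 .lf))))) 585 50 (.nd (.nd (.nd (.nd .lf 586 50 (.nd .lf 587 50 .lf)) 602 42 (.nd (.nd .lf 603 37 .lf) 620 33 (.nd .lf 621 33 .lf))) 638 20 (.nd (.nd (.nd .lf 639 18 .lf) 640 63 (.nd .lf 641 50 .lf)) 642 59 (.nd (.nd .lf 643 50 .lf) 644 51 (.nd .lf 645 34 .lf)))) 646 42 (.nd (.nd (.nd .lf 647 30 (.nd .lf 649 38 .lf)) 651 33 (.nd (.nd .lf 653 29 .lf) 655 28 (.nd .lf 658 59 .lf))) 662 42 (.nd (.nd (.nd .lf 667 33 .lf) 671 24 (.nd .lf 676 51 .lf)) 677 34 (.nd (.nd .lf 685 29 .lf) 694 42 (.nd .lf 703 24 .lf)))))) 712 54 (.nd (.nd (.nd (.nd (.nd .lf 713 38 (.nd .lf 714 42 .lf)) 715 33 (.nd (.nd .lf 730 42 .lf) 731 33 (.nd .lf 748 32 .lf))) 749 29 (.nd (.nd (.nd .lf 766 20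 .lf) 767 11 (.nd .lf 768 63 .lf)) 769 63 (.nd (.nd .lf 770 47 .lf) 771 43 (.nd .lf 772 51 .lf)))) 773 41 (.nd (.nd (.nd .lf 774 42 (.nd .lf 775 30 .lf)) 777 50 (.nd (.nd .lf 779 33 .lf) 781 33 (.nd .lf 783 24 .lf))) 786 47 (.nd (.nd (.nd .lf 790 42 .lf) 795 33 (.nd .lf 799 24 .lf)) 804 51 (.nd (.nd .lf 805 41 .lf) 813 33 (.nd .lf 822 42 .lf))))) 831 24 (.nd (.nd (.nd (.nd .lf 840 54 (.nd .lf 841 50 .lf)) 842 42 (.nd (.nd .lf 843 33 .lf) 858 42 (.nd .lf 859 33 .lf))) 876 33 (.nd (.nd (.nd .lf 877 33 .lf) 894 20 (.nd .lf 895 11 .lf)) 896 63 (.nd (.nd .lf 897 50 .lf) 898 47 (.nd .lf 899 37 .lf)))) 900 51 (.nd (.nd (.nd .lf 901 34 (.nd .lf 902 42 .lf)) 903 24 (.nd (.nd .lf 905 38 .lf) 907 33 (.nd .lf 909 29 .lf))) 911 24 (.nd (.nd (.nd .lf 914 47 .lf) 918 42 (.nd .lf 923 33 .lf)) 927 24 (.nd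 (.nd .lf 932 51 .lf) 933 34 (.nd .lf 941 29 .lf)))))))) 950 42 (.nd (.nd (.nd (.nd (.nd (.nd (.nd .lf 959 24 (.nd .lf 968 54 .lf)) 969 38 (.nd (.nd .lf 970 42 .lf) 971 33 (.nd .lf 986 42 .lf))) 987 33 (.nd (.nd .lf 1004 32 (.nd .lf 1005 29 .lf)) 1022 20 (.nd (.nd .lf 1023 11 .lf) 1152 63 (.nd .lf 1153 50 .lf)))) 1154 59 (.nd (.nd (.nd .lf 1155 50 (.nd .lf 1156 59 .lf)) 1157 50 (.nd (.nd .lf 1158 59 .lf) 1159 50 (.nd .lf 1161 38 .lf))) 1163 28 (.nd (.nd (.nd .lf 1165 29 .lf) 1167 28 (.nd .lf 1170 59 .lf)) 1174 59 (.nd (.nd .lf 1179 20 .lf) 1183 15 (.nd .lf 1188 51 .lf))))) 1189 46 (.nd (.nd (.nd (.nd .lf 1197 29 (.nd .lf 1206 46 .lf)) 1215 11 (.nd (.nd .lf 1224 42 .lf) 1225 38 (.nd .lf 1226 42 .lf))) 1227 28 (.nd (.nd (.nd .lf 1242 42 .lf) 1243 20 (.nd .lf 1260 29 .lf)) 1261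 29 (.nd (.nd .lf 1278 27 .lf) 1279 11 (.nd .lf 1408 63 .lf)))) 1409 50 (.nd (.nd (.nd .lf 1410 47 (.nd .lf 1411 37 .lf)) 1412 51 (.nd (.nd .lf 1413 46 .lf) 1414 42 (.nd .lf 1415 37 .lf))) 1417 38 (.nd (.nd (.nd .lf 1419 21 .lf) 1421 29 (.nd .lf 1423 17 .lf)) 1426 47 (.nd (.nd .lf 1430 42 .lf) 1435 16 (.nd .lf 1439 15 .lf)))))) 1444 51 (.nd (.nd (.nd (.nd (.nd .lf 1445 46 (.nd .lf 1453 29 .lf)) 1462 42 (.nd (.nd .lf 1471 11 .lf) 1480 41 (.nd .lf 1481 38 .lf))) 1482 38 (.nd (.nd .lf 1483 21 (.nd .lf 1498 38 .lf)) 1499 16 (.nd (.nd .lf 1516 29 .lf) 1517 29 (.nd .lf 1534 20 .lf)))) 1535 11 (.nd (.nd (.nd .lf 1664 63 (.nd .lf 1665 50 .lf)) 1666 59 (.nd (.nd .lf 1667 50 .lf) 1668 51 (.nd .lf 1669 34 .lf))) 1670 42 (.nd (.nd (.nd .lf 1671 30 .lf) 1673 38 (.nd .lf 1675 28 .lf))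 1677 29 (.nd (.nd .lf 1679 17 .lf) 1682 59 (.nd .lf 1686 42 .lf))))) 1691 20 (.nd (.nd (.nd (.nd .lf 1695 11 (.nd .lf 1700 51 .lf)) 1701 34 (.nd (.nd .lf 1709 29 .lf) 1718 42 (.nd .lf 1727 11 .lf))) 1736 42 (.nd (.nd (.nd .lf 1737 38 .lf) 1738 42 (.nd .lf 1739 28 .lf)) 1754 42 (.nd (.nd .lf 1755 20 .lf) 1772 29 (.nd .lf 1773 29 .lf)))) 1790 20 (.nd (.nd (.nd .lf 1791 11 (.nd .lf 1920 63 .lf)) 1921 50 (.nd (.nd .lf 1922 47 .lf) 1923 37 (.nd .lf 1924 51 .lf))) 1925 34 (.nd (.nd (.nd .lf 1926 42 .lf) 1927 24 (.nd .lf 1929 38 .lf)) 1931 21 (.nd (.nd .lf 1933 29 .lf) 1935 11 (.nd .lf 1938 47 .lf))))))) 1942 42 (.nd (.nd (.nd (.nd (.nd (.nd .lf 1947 16 (.nd .lf 1951 11 .lf)) 1956 51 (.nd (.nd .lf 1957 34 .lf) 1965 29 (.nd .lf 1974 42 .lf))) 1983 11 (.nd (.nd .lf 1992 41 (.nd .lf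 1993 38 .lf)) 1994 38 (.nd (.nd .lf 1995 21 .lf) 2010 38 (.nd .lf 2011 16 .lf)))) 2028 29 (.nd (.nd (.nd .lf 2029 29 (.nd .lf 2046 20 .lf)) 2047 11 (.nd (.nd .lf 2304 63 .lf) 2305 63 (.nd .lf 2306 47 .lf))) 2307 43 (.nd (.nd (.nd .lf 2308 51 .lf) 2309 46 (.nd .lf 2310 41 .lf)) 2311 41 (.nd (.nd .lf 2313 50 .lf) 2315 37 (.nd .lf 2317 46 .lf))))) 2319 37 (.nd (.nd (.nd (.nd .lf 2322 47 (.nd .lf 2326 37 .lf)) 2331 21 (.nd (.nd .lf 2335 15 .lf) 2340 51 (.nd .lf 2341 46 .lf))) 2349 46 (.nd (.nd (.nd .lf 2358 29 .lf) 2367 11 (.nd .lf 2376 50 .lf)) 2377 50 (.nd (.nd .lf 2378 38 .lf) 2379 33 (.nd .lf 2394 38 .lf)))) 2395 21 (.nd (.nd (.nd .lf 2412 36 (.nd .lf 2413 33 .lf)) 2430 20 (.nd (.nd .lf 2431 11 .lf) 2816 63 (.nd .lf 2817 63 .lf))) 2818 47 (.nd (.nd (.nd .lf 2819 43 .lf)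 2820 47 (.nd .lf 2821 41 .lf)) 2822 30 (.nd (.nd .lf 2823 30 .lf) 2825 50 (.nd .lf 2827 33 .lf)))))) 2829 33 (.nd (.nd (.nd (.nd (.nd .lf 2831 24 (.nd .lf 2834 47 .lf)) 2838 30 (.nd (.nd .lf 2843 21 .lf) 2847 11 (.nd .lf 2852 47 .lf))) 2853 41 (.nd (.nd (.nd .lf 2861 33 .lf) 2870 25 (.nd .lf 2879 11 .lf)) 2888 50 (.nd (.nd .lf 2889 50 .lf) 2890 38 (.nd .lf 2891 33 .lf)))) 2906 38 (.nd (.nd (.nd .lf 2907 21 (.nd .lf 2924 33 .lf)) 2925 33 (.nd (.nd .lf 2942 20 .lf) 2943 11 (.nd .lf 3456 51 .lf))) 3457 50 (.nd (.nd (.nd .lf 3458 47 .lf) 3459 37 (.nd .lf 3460 51 .lf)) 3461 46 (.nd (.nd .lf 3462 37 .lf) 3463 37 (.nd .lf 3465 38 .lf))))) 3467 21 (.nd (.nd (.nd (.nd .lf 3469 29 (.nd .lf 3471 17 .lf)) 3474 47 (.nd (.nd .lf 3478 37 .lf) 3483 16 (.nd .lf 3487 4 .lf))) 3492 51 (.nd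 (.nd (.nd .lf 3493 46 .lf) 3501 29 (.nd .lf 3510 29 .lf)) 3519 0 (.nd (.nd .lf 3528 38 .lf) 3529 38 (.nd .lf 3530 38 .lf)))) 3531 21 (.nd (.nd (.nd .lf 3546 38 (.nd .lf 3547 16 .lf)) 3564 29 (.nd (.nd .lf 3565 29 .lf) 3582 20 (.nd .lf 3583 0 .lf))) 3968 50 (.nd (.nd (.nd .lf 3969 50 .lf) 3970 47 (.nd .lf 3971 37 .lf)) 3972 47 (.nd (.nd .lf 3973 34 .lf) 3974 30 (.nd .lf 3975 24 .lf))))))))) 3977 38 (.nd (.nd (.nd (.nd (.nd (.nd (.nd (.nd .lf 3979 21 (.nd .lf 3981 29 .lf)) 3983 11 (.nd (.nd .lf 3986 47 .lf) 3990 30 (.nd .lf 3995 16 .lf))) 3999 0 (.nd (.nd .lf 4004 47 (.nd .lf 4005 34 .lf)) 4013 29 (.nd (.nd .lf 4022 25 .lf) 4031 0 (.nd .lf 4040 38 .lf)))) 4041 38 (.nd (.nd (.nd .lf 4042 38 (.nd .lf 4043 21 .lf)) 4058 38 (.nd (.nd .lf 4059 16 .lf) 4076 29 (.nd .lf 4077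 29 .lf))) 4094 20 (.nd (.nd (.nd .lf 4095 0 .lf) 4608 63 (.nd .lf 4609 63 .lf)) 4610 63 (.nd (.nd .lf 4611 63 .lf) 4612 47 (.nd .lf 4613 41 .lf))))) 4614 42 (.nd (.nd (.nd (.nd .lf 4615 41 (.nd .lf 4617 50 .lf)) 4619 50 (.nd (.nd .lf 4621 28 .lf) 4623 28 (.nd .lf 4626 59 .lf))) 4630 42 (.nd (.nd (.nd .lf 4635 37 .lf) 4639 24 (.nd .lf 4644 47 .lf)) 4645 35 (.nd (.nd .lf 4653 24 .lf) 4662 30 (.nd .lf 4671 18 .lf)))) 4680 50 (.nd (.nd (.nd .lf 4681 50 (.nd .lf 4682 50 .lf)) 4683 50 (.nd (.nd .lf 4698 42 .lf) 4699 37 (.nd .lf 4716 29 .lf))) 4717 23 (.nd (.nd (.nd .lf 4734 20 .lf) 4735 18 (.nd .lf 4736 59 .lf)) 4737 50 (.nd (.nd .lf 4738 59 .lf) 4739 50 (.nd .lf 4740 47 .lf)))))) 4741 34 (.nd (.nd (.nd (.nd (.nd .lf 4742 42 (.nd .lf 4743 30 .lf)) 4745 38 (.nd (.nd .lf 4747 33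 .lf) 4749 28 (.nd .lf 4751 28 .lf))) 4754 59 (.nd (.nd .lf 4758 42 (.nd .lf 4763 33 .lf)) 4767 24 (.nd (.nd .lf 4772 47 .lf) 4773 34 (.nd .lf 4781 24 .lf)))) 4790 30 (.nd (.nd (.nd .lf 4799 2 (.nd .lf 4808 45 .lf)) 4809 38 (.nd (.nd .lf 4810 42 .lf) 4811 33 (.nd .lf 4826 42 .lf))) 4827 33 (.nd (.nd (.nd .lf 4844 29 .lf) 4845 16 (.nd .lf 4862 20 .lf)) 4863 0 (.nd (.nd .lf 5760 59 .lf) 5761 50 (.nd .lf 5762 59 .lf))))) 5763 50 (.nd (.nd (.nd (.nd .lf 5764 47 (.nd .lf 5765 34 .lf)) 5766 42 (.nd (.nd .lf 5767 30 .lf) 5769 34 (.nd .lf 5771 28 .lf))) 5773 17 (.nd (.nd (.nd .lf 5775 17 .lf) 5778 59 (.nd .lf 5782 42 .lf)) 5787 20 (.nd (.nd .lf 5791 11 .lf) 5796 47 (.nd .lf 5797 34 .lf)))) 5805 17 (.nd (.nd (.nd .lf 5814 30 (.nd .lf 5823 0 .lf)) 5832 42 (.nd (.nd .lf 5833 34 .lf)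 5834 42 (.nd .lf 5835 28 .lf))) 5850 42 (.nd (.nd (.nd .lf 5851 20 .lf) 5868 29 (.nd .lf 5869 12 .lf)) 5886 20 (.nd (.nd .lf 5887 0 .lf) 6912 47 (.nd .lf 6913 45 .lf))))))) 6914 47 (.nd (.nd (.nd (.nd (.nd (.nd .lf 6915 43 (.nd .lf 6916 47 .lf)) 6917 35 (.nd (.nd .lf 6918 30 .lf) 6919 30 (.nd .lf 6921 38 .lf))) 6923 33 (.nd (.nd .lf 6925 24 (.nd .lf 6927 24 .lf)) 6930 47 (.nd (.nd .lf 6934 30 .lf) 6939 21 (.nd .lf 6943 11 .lf)))) 6948 47 (.nd (.nd (.nd .lf 6949 35 (.nd .lf 6957 24 .lf)) 6966 25 (.nd (.nd .lf 6975 9 .lf) 6984 38 (.nd .lf 6985 38 .lf))) 6986 38 (.nd (.nd (.nd .lf 6987 33 .lf) 7002 38 (.nd .lf 7003 21 .lf)) 7020 29 (.nd (.nd .lf 7021 23 .lf) 7038 9 (.nd .lf 7039 9 .lf))))) 8064 47 (.nd (.nd (.nd (.nd .lf 8065 37 (.nd .lf 8066 47 .lf)) 8067 37 (.nd (.nd .lf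 8068 47 .lf) 8069 34 (.nd .lf 8070 30 .lf))) 8071 24 (.nd (.nd (.nd .lf 8073 34 .lf) 8075 21 (.nd .lf 8077 17 .lf)) 8079 11 (.nd (.nd .lf 8082 47 .lf) 8086 30 (.nd .lf 8091 16 .lf)))) 8095 0 (.nd (.nd (.nd .lf 8100 47 (.nd .lf 8101 34 .lf)) 8109 17 (.nd (.nd .lf 8118 25 .lf) 8127 0 (.nd .lf 8136 38 .lf))) 8137 34 (.nd (.nd (.nd .lf 8138 38 .lf) 8139 21 (.nd .lf 8154 38 .lf)) 8155 16 (.nd (.nd .lf 8172 29 .lf) 8173 12 (.nd .lf 8190 9 .lf)))))) 8191 0 (.nd (.nd (.nd (.nd (.nd .lf 9344 59 (.nd .lf 9345 50 .lf)) 9346 59 (.nd (.nd .lf 9347 50 .lf) 9348 59 (.nd .lf 9349 50 .lf))) 9350 59 (.nd (.nd (.nd .lf 9351 50 .lf) 9353 34 (.nd .lf 9355 28 .lf)) 9357 29 (.nd (.nd .lf 9359 28 .lf) 9362 59 (.nd .lf 9366 59 .lf)))) 9371 15 (.nd (.nd (.nd .lf 9375 15 (.nd .lf 9380 51 .lf))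 9381 46 (.nd (.nd .lf 9389 29 .lf) 9398 46 (.nd .lf 9407 11 .lf))) 9416 38 (.nd (.nd (.nd .lf 9417 34 .lf) 9418 32 (.nd .lf 9419 22 .lf)) 9434 32 (.nd (.nd .lf 9435 11 .lf) 9452 29 (.nd .lf 9453 17 .lf))))) 9470 27 (.nd (.nd (.nd (.nd .lf 9471 5 (.nd .lf 9600 54 .lf)) 9601 46 (.nd (.nd .lf 9602 47 .lf) 9603 37 (.nd .lf 9604 51 .lf))) 9605 46 (.nd (.nd (.nd .lf 9606 42 .lf) 9607 37 (.nd .lf 9609 34 .lf)) 9611 21 (.nd (.nd .lf 9613 29 .lf) 9615 17 (.nd .lf 9618 47 .lf)))) 9622 42 (.nd (.nd (.nd .lf 9627 15 (.nd .lf 9631 15 .lf)) 9636 51 (.nd (.nd .lf 9637 46 .lf) 9645 29 (.nd .lf 9654 42 .lf))) 9663 11 (.nd (.nd (.nd .lf 9672 38 .lf) 9673 34 (.nd .lf 9674 25 .lf)) 9675 21 (.nd (.nd .lf 9690 25 .lf) 9691 11 (.nd .lf 9708 29 .lf)))))))) 9709 17 (.nd (.nd (.nd (.nd (.nd (.nd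 (.nd .lf 9726 9 (.nd .lf 9727 0 .lf)) 11648 51 (.nd (.nd .lf 11649 46 .lf) 11650 43 (.nd .lf 11651 37 .lf))) 11652 51 (.nd (.nd .lf 11653 46 (.nd .lf 11654 37 .lf)) 11655 37 (.nd (.nd .lf 11657 34 .lf) 11659 21 (.nd .lf 11661 29 .lf)))) 11663 17 (.nd (.nd (.nd .lf 11666 43 (.nd .lf 11670 37 .lf)) 11675 4 (.nd (.nd .lf 11679 4 .lf) 11684 51 (.nd .lf 11685 46 .lf))) 11693 29 (.nd (.nd (.nd .lf 11702 29 .lf) 11711 0 (.nd .lf 11720 38 .lf)) 11721 34 (.nd (.nd .lf 11722 21 .lf) 11723 21 (.nd .lf 11738 21 .lf))))) 11739 4 (.nd (.nd (.nd (.nd .lf 11756 29 (.nd .lf 11757 17 .lf)) 11774 9 (.nd (.nd .lf 11775 0 .lf) 13952 47 (.nd .lf 13953 34 .lf))) 13954 47 (.nd (.nd (.nd .lf 13955 32 .lf) 13956 47 (.nd .lf 13957 34 .lf)) 13958 42 (.nd (.nd .lf 13959 30 .lf) 13961 34 (.nd .lf 13963 22 .lf)))) 13965 17 (.nd (.nd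 (.nd .lf 13967 17 (.nd .lf 13970 47 .lf)) 13974 42 (.nd (.nd .lf 13979 11 .lf) 13983 11 (.nd .lf 13988 47 .lf))) 13989 34 (.nd (.nd (.nd .lf 13997 17 .lf) 14006 30 (.nd .lf 14015 0 .lf)) 14024 38 (.nd (.nd .lf 14025 34 .lf) 14026 32 (.nd .lf 14027 22 .lf)))))) 14042 32 (.nd (.nd (.nd (.nd (.nd .lf 14043 11 (.nd .lf 14060 18 .lf)) 14061 12 (.nd (.nd .lf 14078 18 .lf) 14079 0 (.nd .lf 16256 47 .lf))) 16257 34 (.nd (.nd .lf 16258 43 (.nd .lf 16259 24 .lf)) 16260 47 (.nd (.nd .lf 16261 34 .lf) 16262 30 (.nd .lf 16263 24 .lf)))) 16265 34 (.nd (.nd (.nd .lf 16267 21 (.nd .lf 16269 17 .lf)) 16271 11 (.nd (.nd .lf 16274 43 .lf) 16278 30 (.nd .lf 16283 4 .lf))) 16287 0 (.nd (.nd (.nd .lf 16292 47 .lf) 16293 34 (.nd .lf 16301 17 .lf)) 16310 25 (.nd (.nd .lf 16319 0 .lf) 16328 38 (.nd .lf 16329 34 .lf))))) 16330 21 (.nd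 (.nd (.nd (.nd .lf 16331 21 (.nd .lf 16346 21 .lf)) 16347 4 (.nd (.nd .lf 16364 18 .lf) 16365 12 (.nd .lf 16382 9 .lf))) 16383 0 (.nd (.nd (.nd .lf 18816 47 .lf) 18818 43 (.nd .lf 18820 46 .lf)) 18822 37 (.nd (.nd .lf 18825 46 .lf) 18827 37 (.nd .lf 18829 46 .lf)))) 18831 37 (.nd (.nd (.nd .lf 18834 43 (.nd .lf 18838 31 .lf)) 18843 16 (.nd (.nd .lf 18847 15 .lf) 18852 46 (.nd .lf 18861 46 .lf))) 18870 20 (.nd (.nd (.nd .lf 18879 2 .lf) 18888 38 (.nd .lf 18889 38 .lf)) 18890 33 (.nd (.nd .lf 18891 33 .lf) 18906 26 (.nd .lf 18907 16 .lf))))))) 18924 36 (.nd (.nd (.nd (.nd (.nd (.nd .lf 18925 33 (.nd .lf 18942 14 .lf)) 18943 0 (.nd (.nd .lf 19328 47 .lf) 19330 43 (.nd .lf 19332 34 .lf))) 19334 30 (.nd (.nd .lf 19337 38 (.nd .lf 19339 33 .lf)) 19341 29 (.nd (.nd .lf 19343 24 .lf) 19346 43 (.nd .lf 19350 30 .lf))))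 19355 16 (.nd (.nd (.nd .lf 19359 4 (.nd .lf 19364 34 .lf)) 19373 29 (.nd (.nd .lf 19382 20 .lf) 19391 2 (.nd .lf 19400 38 .lf))) 19401 38 (.nd (.nd (.nd .lf 19402 33 .lf) 19403 33 (.nd .lf 19418 26 .lf)) 19419 16 (.nd (.nd .lf 19436 29 .lf) 19437 29 (.nd .lf 19454 9 .lf))))) 19455 0 (.nd (.nd (.nd (.nd .lf 23424 47 (.nd .lf 23426 43 .lf)) 23428 30 (.nd (.nd .lf 23430 30 .lf) 23433 38 (.nd .lf 23435 33 .lf))) 23437 24 (.nd (.nd (.nd .lf 23439 24 .lf) 23442 43 (.nd .lf 23446 30 .lf)) 23451 16 (.nd (.nd .lf 23455 4 .lf) 23460 30 (.nd .lf 23469 24 .lf)))) 23478 13 (.nd (.nd (.nd .lf 23487 0 (.nd .lf 23496 38 .lf)) 23497 38 (.nd (.nd .lf 23498 33 .lf) 23499 33 (.nd .lf 23514 26 .lf))) 23515 16 (.nd (.nd (.nd .lf 23532 18 .lf) 23533 16 (.nd .lf 23550 9 .lf)) 23551 0 (.nd (.nd .lf 28032 47 .lf) 28034 43 (.nd .lf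 28036 41 .lf)))))) 28038 31 (.nd (.nd (.nd (.nd (.nd .lf 28041 34 (.nd .lf 28043 21 .lf)) 28045 29 (.nd (.nd .lf 28047 17 .lf) 28050 43 (.nd .lf 28054 31 .lf))) 28059 4 (.nd (.nd (.nd .lf 28063 4 .lf) 28068 41 (.nd .lf 28077 29 .lf)) 28086 20 (.nd (.nd .lf 28095 0 .lf) 28104 34 (.nd .lf 28105 34 .lf)))) 28106 21 (.nd (.nd (.nd .lf 28107 21 (.nd .lf 28122 21 .lf)) 28123 4 (.nd (.nd .lf 28140 27 .lf) 28141 17 (.nd .lf 28158 9 .lf))) 28159 0 (.nd (.nd (.nd .lf 32640 47 .lf) 32642 43 (.nd .lf 32644 30 .lf)) 32646 30 (.nd (.nd .lf 32649 34 .lf) 32651 21 (.nd .lf 32653 17 .lf))))) 32655 11 (.nd (.nd (.nd (.nd .lf 32658 43 (.nd .lf 32662 30 .lf)) 32667 4 (.nd (.nd .lf 32671 0 .lf) 32676 30 (.nd .lf 32685 17 .lf))) 32694 13 (.nd (.nd (.nd .lf 32703 0 .lf) 32712 34 (.nd .lf 32713 34 .lf)) 32714 21 (.nd (.nd .lf 32715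 21 .lf) 32730 21 (.nd .lf 32731 4 .lf)))) 32748 18 (.nd (.nd (.nd .lf 32749 12 (.nd .lf 32766 9 .lf)) 32767 0 (.nd (.nd .lf 37632 47 .lf) 37633 45 (.nd .lf 37636 42 .lf))) 37637 35 (.nd (.nd (.nd .lf 37641 33 .lf) 37645 24 (.nd .lf 37650 47 .lf)) 37654 42 (.nd (.nd .lf 37659 33 .lf) 37663 24 (.nd .lf 37668 35 .lf)))))))))) 37669 35 (.nd (.nd (.nd (.nd (.nd (.nd (.nd (.nd (.nd .lf 37677 23 (.nd .lf 37686 25 .lf)) 37695 9 (.nd (.nd .lf 37704 45 .lf) 37705 33 (.nd .lf 37722 42 .lf))) 37723 33 (.nd (.nd .lf 37740 23 (.nd .lf 37741 23 .lf)) 37758 9 (.nd (.nd .lf 37759 9 .lf) 38784 47 (.nd .lf 38785 34 .lf)))) 38788 42 (.nd (.nd (.nd .lf 38789 30 (.nd .lf 38793 21 .lf)) 38797 17 (.nd (.nd .lf 38802 47 .lf) 38806 42 (.nd .lf 38811 16 .lf))) 38815 11 (.nd (.nd (.nd .lf 38820 35 .lf) 38821 30 (.nd .lf 38829 17 .lf))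 38838 25 (.nd (.nd .lf 38847 0 .lf) 38856 38 (.nd .lf 38857 21 .lf))))) 38874 38 (.nd (.nd (.nd (.nd .lf 38875 16 (.nd .lf 38892 18 .lf)) 38893 7 (.nd (.nd .lf 38910 9 .lf) 38911 0 (.nd .lf 46976 47 .lf))) 46977 34 (.nd (.nd (.nd .lf 46980 42 .lf) 46981 30 (.nd .lf 46985 17 .lf)) 46989 17 (.nd (.nd .lf 46994 47 .lf) 46998 42 (.nd .lf 47003 11 .lf)))) 47007 11 (.nd (.nd (.nd .lf 47012 35 (.nd .lf 47013 30 .lf)) 47021 17 (.nd (.nd .lf 47030 25 .lf) 47039 0 (.nd .lf 47048 27 .lf))) 47049 17 (.nd (.nd (.nd .lf 47066 25 .lf) 47067 11 (.nd .lf 47084 18 .lf)) 47085 0 (.nd (.nd .lf 47102 9 .lf) 47103 0 (.nd .lf 56192 43 .lf)))))) 56196 30 (.nd (.nd (.nd (.nd (.nd .lf 56201 28 (.nd .lf 56205 18 .lf)) 56210 43 (.nd (.nd .lf 56214 30 .lf) 56219 16 (.nd .lf 56223 4 .lf))) 56228 30 (.nd (.nd .lf 56237 18 (.nd .lf 56246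 13 .lf)) 56255 0 (.nd (.nd .lf 56264 36 .lf) 56265 28 (.nd .lf 56282 26 .lf)))) 56283 16 (.nd (.nd (.nd .lf 56300 18 (.nd .lf 56301 7 .lf)) 56318 9 (.nd (.nd .lf 56319 0 .lf) 65408 43 (.nd .lf 65412 30 .lf))) 65417 17 (.nd (.nd (.nd .lf 65421 17 .lf) 65426 43 (.nd .lf 65430 30 .lf)) 65435 4 (.nd (.nd .lf 65439 0 .lf) 65444 30 (.nd .lf 65453 17 .lf))))) 65462 13 (.nd (.nd (.nd (.nd .lf 65471 0 (.nd .lf 65480 27 .lf)) 65481 17 (.nd (.nd .lf 65498 21 .lf) 65499 4 (.nd .lf 65516 18 .lf))) 65517 0 (.nd (.nd (.nd .lf 65534 9 .lf) 65535 0 (.nd .lf 75264 54 .lf)) 75265 54 (.nd (.nd .lf 75266 54 .lf) 75267 54 (.nd .lf 75273 33 .lf)))) 75275 32 (.nd (.nd (.nd .lf 75282 42 (.nd .lf 75291 27 .lf)) 75300 51 (.nd (.nd .lf 75301 41 .lf) 75309 33 (.nd .lf 75318 42 .lf))) 75327 18 (.nd (.nd (.nd .lf 75336 32 .lf) 75337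 32 (.nd .lf 75338 32 .lf)) 75339 32 (.nd (.nd .lf 75354 32 .lf) 75355 27 (.nd .lf 75372 18 .lf))))))) 75373 18 (.nd (.nd (.nd (.nd (.nd (.nd .lf 75390 18 (.nd .lf 75391 18 .lf)) 75392 54 (.nd (.nd .lf 75393 34 .lf) 75394 42 (.nd .lf 75395 32 .lf))) 75401 29 (.nd (.nd .lf 75403 22 (.nd .lf 75410 42 .lf)) 75419 11 (.nd (.nd .lf 75428 51 .lf) 75429 34 (.nd .lf 75437 29 .lf)))) 75446 42 (.nd (.nd (.nd .lf 75455 11 (.nd .lf 75464 32 .lf)) 75465 22 (.nd (.nd .lf 75466 32 .lf) 75467 22 (.nd .lf 75482 32 .lf))) 75483 10 (.nd (.nd (.nd .lf 75500 18 .lf) 75501 12 (.nd .lf 75518 18 .lf)) 75519 0 (.nd (.nd .lf 77568 54 .lf) 77569 54 (.nd .lf 77570 32 .lf))))) 77571 32 (.nd (.nd (.nd (.nd .lf 77577 33 (.nd .lf 77579 17 .lf)) 77586 30 (.nd (.nd .lf 77595 11 .lf) 77604 47 (.nd .lf 77605 41 .lf))) 77613 33 (.nd (.nd (.nd .lf 77622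 25 .lf) 77631 11 (.nd .lf 77640 32 .lf)) 77641 32 (.nd (.nd .lf 77642 17 .lf) 77643 17 (.nd .lf 77658 16 .lf)))) 77659 9 (.nd (.nd (.nd .lf 77676 18 (.nd .lf 77677 18 .lf)) 77694 9 (.nd (.nd .lf 77695 9 .lf) 77696 47 (.nd .lf 77697 34 .lf))) 77698 30 (.nd (.nd (.nd .lf 77699 21 .lf) 77705 29 (.nd .lf 77707 17 .lf)) 77714 30 (.nd (.nd .lf 77723 4 .lf) 77732 47 (.nd .lf 77733 34 .lf)))))) 77741 29 (.nd (.nd (.nd (.nd (.nd .lf 77750 25 (.nd .lf 77759 0 .lf)) 77768 27 (.nd (.nd .lf 77769 22 .lf) 77770 17 (.nd .lf 77771 17 .lf))) 77786 16 (.nd (.nd (.nd .lf 77787 4 .lf) 77804 18 (.nd .lf 77805 12 .lf)) 77822 9 (.nd (.nd .lf 77823 0 .lf) 94080 36 (.nd .lf 94082 26 .lf)))) 94089 29 (.nd (.nd (.nd .lf 94091 17 (.nd .lf 94098 26 .lf)) 94107 4 (.nd (.nd .lf 94116 34 .lf) 94125 29 (.nd .lf 94134 20 .lf))) 94143 0 (.nd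 (.nd (.nd .lf 94152 27 .lf) 94153 22 (.nd .lf 94154 17 .lf)) 94155 17 (.nd (.nd .lf 94170 9 .lf) 94171 4 (.nd .lf 94188 18 .lf))))) 94189 12 (.nd (.nd (.nd (.nd .lf 94206 9 (.nd .lf 94207 0 .lf)) 112384 45 (.nd (.nd .lf 112385 45 .lf) 112393 27 (.nd .lf 112402 37 .lf))) 112411 9 (.nd (.nd (.nd .lf 112420 35 .lf) 112421 35 (.nd .lf 112429 23 .lf)) 112438 25 (.nd (.nd .lf 112447 9 .lf) 112456 27 (.nd .lf 112457 27 .lf)))) 112474 16 (.nd (.nd (.nd .lf 112475 9 (.nd .lf 112492 18 .lf)) 112493 18 (.nd (.nd .lf 112510 9 .lf) 112511 9 (.nd .lf 112512 45 .lf))) 112513 30 (.nd (.nd (.nd .lf 112521 17 .lf) 112530 37 (.nd .lf 112539 5 .lf)) 112548 35 (.nd (.nd .lf 112549 30 .lf) 112557 17 (.nd .lf 112566 25 .lf)))))))) 112575 0 (.nd (.nd (.nd (.nd (.nd (.nd (.nd .lf 112584 27 (.nd .lf 112585 17 .lf)) 112602 16 (.nd (.nd .lf 112603 5 .lf) 112620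 18 (.nd .lf 112621 0 .lf))) 112638 9 (.nd (.nd .lf 112639 0 (.nd .lf 130944 36 .lf)) 130953 17 (.nd (.nd .lf 130962 26 .lf) 130971 4 (.nd .lf 130980 30 .lf)))) 130989 17 (.nd (.nd (.nd .lf 130998 13 (.nd .lf 131007 0 .lf)) 131016 27 (.nd (.nd .lf 131017 17 .lf) 131034 9 (.nd .lf 131035 4 .lf))) 131052 18 (.nd (.nd (.nd .lf 131053 0 .lf) 131070 9 (.nd .lf 131071 0 .lf)) 150656 41 (.nd (.nd .lf 150657 41 .lf) 150658 41 (.nd .lf 150659 41 .lf))))) 150660 41 (.nd (.nd (.nd (.nd .lf 150661 41 (.nd .lf 150662 41 .lf)) 150663 41 (.nd (.nd .lf 150674 41 .lf) 150678 41 (.nd .lf 150692 41 .lf))) 150693 29 (.nd (.nd (.nd .lf 150710 36 .lf) 150728 38 (.nd .lf 150729 38 .lf)) 150730 28 (.nd (.nd .lf 150731 28 .lf) 150746 27 (.nd .lf 150764 29 .lf)))) 150765 29 (.nd (.nd (.nd .lf 150782 27 (.nd .lf 150912 41 .lf)) 150913 41 (.nd (.nd .lf 150914 31 .lf) 150915 21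 (.nd .lf 150916 41 .lf))) 150917 29 (.nd (.nd (.nd .lf 150918 31 .lf) 150919 19 (.nd .lf 150930 31 .lf)) 150934 31 (.nd (.nd .lf 150948 41 .lf) 150949 29 (.nd .lf 150966 19 .lf)))))) 150984 38 (.nd (.nd (.nd (.nd (.nd .lf 150985 38 (.nd .lf 150986 21 .lf)) 150987 21 (.nd (.nd .lf 151002 21 .lf) 151020 29 (.nd .lf 151021 29 .lf))) 151038 9 (.nd (.nd .lf 155264 41 (.nd .lf 155265 41 .lf)) 155266 41 (.nd (.nd .lf 155267 41 .lf) 155268 26 (.nd .lf 155269 19 .lf)))) 155270 26 (.nd (.nd (.nd .lf 155271 19 (.nd .lf 155282 41 .lf)) 155286 26 (.nd (.nd .lf 155300 25 .lf) 155301 17 (.nd .lf 155318 18 .lf))) 155336 34 (.nd (.nd (.nd .lf 155337 34 .lf) 155338 28 (.nd .lf 155339 28 .lf)) 155354 27 (.nd (.nd .lf 155372 18 .lf) 155373 12 (.nd .lf 155390 18 .lf))))) 155520 36 (.nd (.nd (.nd (.nd .lf 155521 34 (.nd .lf 155522 31 .lf)) 155523 21 (.nd (.nd .lf 155524 26 .lf)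 155525 17 (.nd .lf 155526 26 .lf))) 155527 8 (.nd (.nd (.nd .lf 155538 31 .lf) 155542 26 (.nd .lf 155556 25 .lf)) 155557 17 (.nd (.nd .lf 155574 13 .lf) 155592 34 (.nd .lf 155593 34 .lf)))) 155594 21 (.nd (.nd (.nd .lf 155595 21 (.nd .lf 155610 21 .lf)) 155628 18 (.nd (.nd .lf 155629 12 .lf) 155646 9 (.nd .lf 188288 36 .lf))) 188289 23 (.nd (.nd (.nd .lf 188292 26 .lf) 188293 13 (.nd .lf 188306 31 .lf)) 188310 26 (.nd (.nd .lf 188324 18 .lf) 188325 13 (.nd .lf 188342 13 .lf))))))) 188360 27 (.nd (.nd (.nd (.nd (.nd (.nd .lf 188361 21 (.nd .lf 188378 21 .lf)) 188396 18 (.nd (.nd .lf 188397 7 .lf) 188414 9 (.nd .lf 224896 36 .lf))) 224897 32 (.nd (.nd .lf 224898 36 (.nd .lf 224899 32 .lf)) 224914 36 (.nd (.nd .lf 224932 25 .lf) 224933 24 (.nd .lf 224950 18 .lf)))) 224968 27 (.nd (.nd (.nd .lf 224969 22 (.nd .lf 224970 27 .lf)) 224971 22 (.nd (.nd .lf 224986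 27 .lf) 225004 18 (.nd .lf 225005 12 .lf))) 225022 18 (.nd (.nd (.nd .lf 225152 36 .lf) 225153 32 (.nd .lf 225154 26 .lf)) 225155 17 (.nd (.nd .lf 225170 26 .lf) 225188 25 (.nd .lf 225189 24 .lf))))) 225206 14 (.nd (.nd (.nd (.nd .lf 225224 27 (.nd .lf 225225 22 .lf)) 225226 17 (.nd (.nd .lf 225227 17 .lf) 225242 9 (.nd .lf 225260 18 .lf))) 225261 12 (.nd (.nd (.nd .lf 225278 9 .lf) 262016 36 (.nd .lf 262017 23 .lf)) 262034 26 (.nd (.nd .lf 262052 18 .lf) 262053 13 (.nd .lf 262070 13 .lf)))) 262088 27 (.nd (.nd (.nd .lf 262089 17 (.nd .lf 262106 9 .lf)) 262124 18 (.nd (.nd .lf 262125 0 .lf) 262142 9 (.nd .lf 301440 47 .lf))) 301441 28 (.nd (.nd (.nd .lf 301442 47 .lf) 301443 28 (.nd .lf 301444 37 .lf)) 301445 28 (.nd (.nd .lf 301446 37 .lf) 301447 28 (.nd .lf 301449 28 .lf)))))) 301451 28 (.nd (.nd (.nd (.nd (.nd .lf 301453 28 (.nd .lf 301455 28 .lf))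 301476 36 (.nd (.nd .lf 301477 28 .lf) 301485 28 (.nd .lf 301512 38 .lf))) 301513 28 (.nd (.nd (.nd .lf 301514 38 .lf) 301515 16 (.nd .lf 301548 36 .lf)) 301549 23 (.nd (.nd .lf 301952 47 .lf) 301953 28 (.nd .lf 301954 47 .lf)))) 301955 28 (.nd (.nd (.nd .lf 301956 30 (.nd .lf 301957 18 .lf)) 301958 30 (.nd (.nd .lf 301959 8 .lf) 301961 28 (.nd .lf 301963 16 .lf))) 301965 18 (.nd (.nd (.nd .lf 301967 6 .lf) 301988 30 (.nd .lf 301989 18 .lf)) 301997 18 (.nd (.nd .lf 302024 38 .lf) 302025 28 (.nd .lf 302026 38 .lf))))) 302027 16 (.nd (.nd (.nd (.nd .lf 302060 18 (.nd .lf 302061 6 .lf)) 310656 43 (.nd (.nd .lf 310657 28 .lf) 310658 43 (.nd .lf 310659 28 .lf))) 310660 37 (.nd (.nd (.nd .lf 310661 28 .lf) 310662 37 (.nd .lf 310663 28 .lf)) 310665 13 (.nd (.nd .lf 310667 6 .lf) 310669 13 (.nd .lf 310671 6 .lf)))) 310692 36 (.nd (.nd (.nd .lf 310693 28 (.nd .lf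 310701 13 .lf)) 310728 27 (.nd (.nd .lf 310729 12 .lf) 310730 21 (.nd .lf 310731 4 .lf))) 310764 27 (.nd (.nd (.nd .lf 310765 5 .lf) 311168 43 (.nd .lf 311169 23 .lf)) 311170 43 (.nd (.nd .lf 311171 21 .lf) 311172 30 (.nd .lf 311173 18 .lf))))))))) 311174 30 (.nd (.nd (.nd (.nd (.nd (.nd (.nd (.nd .lf 311175 8 (.nd .lf 311177 13 .lf)) 311179 4 (.nd (.nd .lf 311181 13 .lf) 311183 0 (.nd .lf 311204 30 .lf))) 311205 18 (.nd (.nd .lf 311213 13 (.nd .lf 311240 27 .lf)) 311241 12 (.nd (.nd .lf 311242 21 .lf) 311243 4 (.nd .lf 311276 18 .lf)))) 311277 0 (.nd (.nd (.nd .lf 376704 36 (.nd .lf 376705 23 .lf)) 376706 30 (.nd (.nd .lf 376707 10 .lf) 376713 13 (.nd .lf 376715 0 .lf))) 376740 30 (.nd (.nd (.nd .lf 376741 18 .lf) 376749 13 (.nd .lf 376776 27 .lf)) 376777 5 (.nd (.nd .lf 376778 16 .lf) 376779 0 (.nd .lf 376812 18 .lf))))) 376813 0 (.nd (.nd (.nd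 (.nd .lf 449920 36 (.nd .lf 449921 23 .lf)) 449922 31 (.nd (.nd .lf 449923 19 .lf) 449924 36 (.nd .lf 449925 23 .lf))) 449926 31 (.nd (.nd (.nd .lf 449927 19 .lf) 449956 36 (.nd .lf 449957 23 .lf)) 449992 27 (.nd (.nd .lf 449993 12 .lf) 449994 21 (.nd .lf 449995 11 .lf)))) 450028 27 (.nd (.nd (.nd .lf 450029 5 (.nd .lf 450432 36 .lf)) 450433 23 (.nd (.nd .lf 450434 31 .lf) 450435 19 (.nd .lf 450436 26 .lf))) 450437 13 (.nd (.nd (.nd .lf 450438 26 .lf) 450439 4 (.nd .lf 450468 18 .lf)) 450469 13 (.nd (.nd .lf 450504 27 .lf) 450505 12 (.nd .lf 450506 21 .lf)))))) 450507 11 (.nd (.nd (.nd (.nd (.nd .lf 450540 18 (.nd .lf 450541 1 .lf)) 524160 36 (.nd (.nd .lf 524161 23 .lf) 524162 26 (.nd .lf 524163 10 .lf))) 524196 18 (.nd (.nd .lf 524197 13 (.nd .lf 524232 27 .lf)) 524233 5 (.nd (.nd .lf 524234 9 .lf) 524235 0 (.nd .lf 524268 18 .lf)))) 524269 0 (.nd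 (.nd (.nd .lf 602880 47 (.nd .lf 602881 45 .lf)) 602882 37 (.nd (.nd .lf 602883 32 .lf) 602884 47 (.nd .lf 602885 35 .lf))) 602886 25 (.nd (.nd (.nd .lf 602887 19 .lf) 602889 27 (.nd .lf 602891 15 .lf)) 602893 24 (.nd (.nd .lf 602895 15 .lf) 602898 37 (.nd .lf 602902 25 .lf))))) 602907 15 (.nd (.nd (.nd (.nd .lf 602911 15 (.nd .lf 602952 45 .lf)) 602953 27 (.nd (.nd .lf 602954 32 .lf) 602955 15 (.nd .lf 602970 32 .lf))) 602971 15 (.nd (.nd (.nd .lf 603008 47 .lf) 603009 34 (.nd .lf 603010 37 .lf)) 603011 15 (.nd (.nd .lf 603012 47 .lf) 603013 34 (.nd .lf 603014 25 .lf)))) 603015 15 (.nd (.nd (.nd .lf 603017 24 (.nd .lf 603019 15 .lf)) 603021 24 (.nd (.nd .lf 603023 15 .lf) 603026 37 (.nd .lf 603030 25 .lf))) 603035 15 (.nd (.nd (.nd .lf 603039 15 .lf) 603080 45 (.nd .lf 603081 23 .lf)) 603082 32 (.nd (.nd .lf 603083 15 .lf) 603098 32 (.nd .lf 603099 15 .lf)))))))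 604032 47 (.nd (.nd (.nd (.nd (.nd (.nd .lf 604033 34 (.nd .lf 604034 37 .lf)) 604035 15 (.nd (.nd .lf 604036 47 .lf) 604037 34 (.nd .lf 604038 25 .lf))) 604039 15 (.nd (.nd .lf 604041 17 (.nd .lf 604043 5 .lf)) 604045 17 (.nd (.nd .lf 604047 0 .lf) 604050 37 (.nd .lf 604054 25 .lf)))) 604059 5 (.nd (.nd (.nd .lf 604063 0 (.nd .lf 604104 27 .lf)) 604105 17 (.nd (.nd .lf 604106 15 .lf) 604107 5 (.nd .lf 604122 15 .lf))) 604123 5 (.nd (.nd (.nd .lf 621440 36 .lf) 621442 21 (.nd .lf 621444 30 .lf)) 621446 15 (.nd (.nd .lf 621449 24 .lf) 621451 15 (.nd .lf 621453 24 .lf))))) 621455 15 (.nd (.nd (.nd (.nd .lf 621458 21 (.nd .lf 621462 13 .lf)) 621467 0 (.nd (.nd .lf 621471 0 .lf) 621512 36 (.nd .lf 621513 23 .lf))) 621514 15 (.nd (.nd (.nd .lf 621515 15 .lf) 621530 14 (.nd .lf 621531 0 .lf)) 622464 36 (.nd (.nd .lf 622466 21 .lf) 622468 30 (.nd .lf 622470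 13 .lf)))) 622473 17 (.nd (.nd (.nd .lf 622475 5 (.nd .lf 622477 17 .lf)) 622479 0 (.nd (.nd .lf 622482 21 .lf) 622486 13 (.nd .lf 622491 0 .lf))) 622495 0 (.nd (.nd (.nd .lf 622536 27 .lf) 622537 17 (.nd .lf 622538 9 .lf)) 622539 5 (.nd (.nd .lf 622554 9 .lf) 622555 0 (.nd .lf 753536 36 .lf)))))) 753537 23 (.nd (.nd (.nd (.nd (.nd .lf 753538 14 (.nd .lf 753539 10 .lf)) 753540 25 (.nd (.nd .lf 753541 17 .lf) 753542 9 (.nd .lf 753543 0 .lf))) 753554 14 (.nd (.nd (.nd .lf 753558 9 .lf) 753608 27 (.nd .lf 753609 17 .lf)) 753610 9 (.nd (.nd .lf 753611 5 .lf) 753626 9 (.nd .lf 899968 36 .lf)))) 899969 23 (.nd (.nd (.nd .lf 899970 21 (.nd .lf 899971 10 .lf)) 899972 30 (.nd (.nd .lf 899973 18 .lf) 899974 20 (.nd .lf 899975 6 .lf))) 899977 23 (.nd (.nd (.nd .lf 899979 10 .lf) 899981 18 (.nd .lf 899983 6 .lf)) 900040 36 (.nd (.nd .lf 900041 23 .lf)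 900042 14 (.nd .lf 900043 10 .lf))))) 900992 36 (.nd (.nd (.nd (.nd .lf 900993 23 (.nd .lf 900994 21 .lf)) 900995 10 (.nd (.nd .lf 900996 30 .lf) 900997 18 (.nd .lf 900998 20 .lf))) 900999 6 (.nd (.nd (.nd .lf 901001 13 .lf) 901003 0 (.nd .lf 901005 13 .lf)) 901007 0 (.nd (.nd .lf 901064 27 .lf) 901065 5 (.nd .lf 901066 10 .lf)))) 901067 0 (.nd (.nd (.nd .lf 1048448 36 (.nd .lf 1048449 23 .lf)) 1048450 14 (.nd (.nd .lf 1048451 10 .lf) 1048452 18 (.nd .lf 1048453 13 .lf))) 1048454 9 (.nd (.nd (.nd .lf 1048455 0 .lf) 1048520 27 (.nd .lf 1048521 5 .lf)) 1048522 9 (.nd (.nd .lf 1048523 0 .lf) 1205760 54 (.nd .lf 1205761 54 .lf)))))))) 1205762 54 (.nd (.nd (.nd (.nd (.nd (.nd (.nd .lf 1205763 54 (.nd .lf 1205764 41 .lf)) 1205765 41 (.nd (.nd .lf 1205766 41 .lf) 1205767 41 (.nd .lf 1205769 34 .lf))) 1205771 32 (.nd (.nd .lf 1205773 28 (.nd .lf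 1205775 28 .lf)) 1205778 36 (.nd (.nd .lf 1205782 24 .lf) 1205787 27 (.nd .lf 1205791 18 .lf)))) 1205796 41 (.nd (.nd (.nd .lf 1205797 41 (.nd .lf 1205805 28 .lf)) 1205814 24 (.nd (.nd .lf 1205823 18 .lf) 1205888 54 (.nd .lf 1205889 34 .lf))) 1205890 36 (.nd (.nd (.nd .lf 1205891 32 .lf) 1205892 41 (.nd .lf 1205893 24 .lf)) 1205894 24 (.nd (.nd .lf 1205895 19 .lf) 1205897 34 (.nd .lf 1205899 22 .lf))))) 1205901 12 (.nd (.nd (.nd (.nd .lf 1205903 6 (.nd .lf 1205906 36 .lf)) 1205910 24 (.nd (.nd .lf 1205915 11 .lf) 1205919 2 (.nd .lf 1205924 41 .lf))) 1205925 24 (.nd (.nd (.nd .lf 1205933 12 .lf) 1205942 24 (.nd .lf 1205951 2 .lf)) 1206016 54 (.nd (.nd .lf 1206017 54 .lf) 1206018 32 (.nd .lf 1206019 32 .lf)))) 1206020 41 (.nd (.nd (.nd .lf 1206021 41 (.nd .lf 1206022 24 .lf)) 1206023 19 (.nd (.nd .lf 1206025 34 .lf) 1206027 21 (.nd .lf 1206029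 28 .lf))) 1206031 9 (.nd (.nd (.nd .lf 1206034 32 .lf) 1206038 24 (.nd .lf 1206043 16 .lf)) 1206047 9 (.nd (.nd .lf 1206052 41 .lf) 1206053 41 (.nd .lf 1206061 28 .lf)))))) 1206070 24 (.nd (.nd (.nd (.nd (.nd .lf 1206079 9 (.nd .lf 1206144 54 .lf)) 1206145 34 (.nd (.nd .lf 1206146 32 .lf) 1206147 21 (.nd .lf 1206148 41 .lf))) 1206149 24 (.nd (.nd .lf 1206150 24 (.nd .lf 1206151 2 .lf)) 1206153 34 (.nd (.nd .lf 1206155 21 .lf) 1206157 12 (.nd .lf 1206159 2 .lf)))) 1206162 32 (.nd (.nd (.nd .lf 1206166 24 (.nd .lf 1206171 11 .lf)) 1206175 2 (.nd (.nd .lf 1206180 41 .lf) 1206181 24 (.nd .lf 1206189 12 .lf))) 1206198 24 (.nd (.nd (.nd .lf 1206207 2 .lf) 1208064 54 (.nd .lf 1208065 54 .lf)) 1208066 32 (.nd (.nd .lf 1208067 32 .lf) 1208068 41 (.nd .lf 1208069 41 .lf))))) 1208070 19 (.nd (.nd (.nd (.nd .lf 1208071 19 (.nd .lf 1208073 34 .lf))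 1208075 21 (.nd (.nd .lf 1208077 28 .lf) 1208079 9 (.nd .lf 1208082 26 .lf))) 1208086 14 (.nd (.nd (.nd .lf 1208091 16 .lf) 1208095 9 (.nd .lf 1208100 41 .lf)) 1208101 41 (.nd (.nd .lf 1208109 28 .lf) 1208118 14 (.nd .lf 1208127 9 .lf)))) 1208192 36 (.nd (.nd (.nd .lf 1208193 34 (.nd .lf 1208194 26 .lf)) 1208195 21 (.nd (.nd .lf 1208196 24 .lf) 1208197 24 (.nd .lf 1208198 14 .lf))) 1208199 2 (.nd (.nd (.nd .lf 1208201 34 .lf) 1208203 21 (.nd .lf 1208205 12 .lf)) 1208207 2 (.nd (.nd .lf 1208210 26 .lf) 1208214 14 (.nd .lf 1208219 4 .lf))))))) 1208223 0 (.nd (.nd (.nd (.nd (.nd (.nd .lf 1208228 24 (.nd .lf 1208229 24 .lf)) 1208237 12 (.nd (.nd .lf 1208246 14 .lf) 1208255 0 (.nd .lf 1242880 45 .lf))) 1242881 45 (.nd (.nd .lf 1242884 24 (.nd .lf 1242885 23 .lf)) 1242889 28 (.nd (.nd .lf 1242893 18 .lf) 1242898 32 (.nd .lf 1242902 24 .lf))))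 1242907 16 (.nd (.nd (.nd .lf 1242911 9 (.nd .lf 1242916 23 .lf)) 1242917 23 (.nd (.nd .lf 1242925 18 .lf) 1242934 9 (.nd .lf 1242943 9 .lf))) 1243008 45 (.nd (.nd (.nd .lf 1243009 23 .lf) 1243012 24 (.nd .lf 1243013 8 .lf)) 1243017 17 (.nd (.nd .lf 1243021 2 .lf) 1243026 32 (.nd .lf 1243030 24 .lf))))) 1243035 11 (.nd (.nd (.nd (.nd .lf 1243039 2 (.nd .lf 1243044 23 .lf)) 1243045 8 (.nd (.nd .lf 1243053 0 .lf) 1243062 9 (.nd .lf 1243071 0 .lf))) 1245056 36 (.nd (.nd (.nd .lf 1245060 18 .lf) 1245065 17 (.nd .lf 1245069 0 .lf)) 1245074 26 (.nd (.nd .lf 1245078 14 .lf) 1245083 4 (.nd .lf 1245087 0 .lf)))) 1245092 18 (.nd (.nd (.nd .lf 1245101 0 (.nd .lf 1245110 9 .lf)) 1245119 0 (.nd (.nd .lf 1507200 36 .lf) 1507201 23 (.nd .lf 1507202 26 .lf))) 1507203 10 (.nd (.nd (.nd .lf 1507204 18 .lf) 1507205 1 (.nd .lf 1507206 14 .lf))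 1507207 0 (.nd (.nd .lf 1507209 12 .lf) 1507211 4 (.nd .lf 1507213 0 .lf)))))) 1507215 0 (.nd (.nd (.nd (.nd (.nd .lf 1507236 18 (.nd .lf 1507237 1 .lf)) 1507245 0 (.nd (.nd .lf 1799936 45 .lf) 1799937 45 (.nd .lf 1799938 32 .lf))) 1799939 32 (.nd (.nd (.nd .lf 1799940 23 .lf) 1799941 23 (.nd .lf 1799942 19 .lf)) 1799943 19 (.nd (.nd .lf 1799945 27 .lf) 1799947 10 (.nd .lf 1799949 18 .lf)))) 1799951 9 (.nd (.nd (.nd .lf 1799954 32 (.nd .lf 1799958 19 .lf)) 1799963 9 (.nd (.nd .lf 1799967 9 .lf) 1800064 45 (.nd .lf 1800065 23 .lf))) 1800066 32 (.nd (.nd (.nd .lf 1800067 10 .lf) 1800068 23 (.nd .lf 1800069 8 .lf)) 1800070 19 (.nd (.nd .lf 1800071 0 .lf) 1800073 17 (.nd .lf 1800075 5 .lf))))) 1800077 7 (.nd (.nd (.nd (.nd .lf 1800079 0 (.nd .lf 1800082 32 .lf)) 1800086 19 (.nd (.nd .lf 1800091 5 .lf) 1800095 0 (.nd .lf 1802112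 36 .lf))) 1802114 14 (.nd (.nd (.nd .lf 1802116 19 .lf) 1802118 9 (.nd .lf 1802121 17 .lf)) 1802123 5 (.nd (.nd .lf 1802125 7 .lf) 1802127 0 (.nd .lf 1802130 14 .lf)))) 1802134 9 (.nd (.nd (.nd .lf 1802139 0 (.nd .lf 1802143 0 .lf)) 2097024 36 (.nd (.nd .lf 2097025 23 .lf) 2097026 14 (.nd .lf 2097027 10 .lf))) 2097028 18 (.nd (.nd (.nd .lf 2097029 1 .lf) 2097030 9 (.nd .lf 2097031 0 .lf)) 2097033 5 (.nd (.nd .lf 2097035 0 .lf) 2097037 0 (.nd .lf 2097039 0 .lf)))))))))))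
lemma tree_init : theTree.find 0 = some 63 := by rfl

lemma tree_ok : chkT theTree theTree = true := by rfl

lemma main_contra (c : ℤ → ℕ) (hb : ∀ v : ℤ, 1 ≤ c v ∧ c v ≤ 15) (hp : Pack c) : False := by
  classical
  set col : ℕ → ℕ := fun n => if c n = 1 then 1 else if c n = 2 then 2 else 0 with hcoldef
  have hcol : ∀ n, col n = 0 ∨ col n = 1 ∨ col n = 2 := by
    intro n
    by_cases h1 : c n = 1 <;> by_cases h2 : c n = 2 <;> simp [col, h1, h2]
  have hcol1 : ∀ n : ℕ, col n = 1 → c n = 1 := by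
    intro n h
    by_cases h1 : c n = 1
    · exact h1
    · by_cases h2 : c n = 2 <;> simp [col, h1, h2] at h
  have hcol2 : ∀ n : ℕ, col n = 2 → c n = 2 := by
    intro n h
    by_cases h2 : c n = 2
    · exact h2
    · by_cases h1 : c n = 1 <;> simp [col, h1, h2] at h
  have hall1 : ∀ n, col n = 1 → runA col n % 2 = 0 := by
    intro n h1
    by_contra hne
    have hb0 : (runA col n % 128).testBit 0 = true := by
      rw [Nat.testBit_zero, decide_eq_true_eq]
      omega
    obtain ⟨m, hm, hcm, hd⟩ := inv1 col n 0 hb0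
    have hconf : Conf (n - m) 1 := by
      rcases hd with h | h
      · rw [show n - m = 4 by omega]; exact dok_conf (by decide)
      · rw [show n - m = 7 by omega]; exact dok_conf (by decide)
    exact pair_no hp (hcol1 m hcm) (hcol1 n h1) hm hconf
  have hall2 : ∀ n, col n = 2 → runA col n / 128 % 2 = 0 := by
    intro n h1
    by_contra hne
    have hb0 : (runA col n / 128).testBit 0 = true := by
      rw [Nat.testBit_zero, decide_eq_true_eq]
      omega
    obtain ⟨m, hm, hcm, hd⟩ := inv2 col n 0 hb0
    have hconf : Conf (n - m) 2 := by
      rcases hd with h | h | h | h | h | h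
      · rw [show n - m = 3 by omega]; exact dok_conf (by decide)
      · rw [show n - m = 4 by omega]; exact dok_conf (by decide)
      · rw [show n - m = 7 by omega]; exact dok_conf (by decide)
      · rw [show n - m = 8 by omega]; exact dok_conf (by decide)
      · rw [show n - m = 11 by omega]; exact dok_conf (by decide)
      · rw [show n - m = 14 by omega]; exact dok_conf (by decide)
    exact pair_no hp (hcol2 m hcm) (hcol2 n h1) hm hconf
  obtain ⟨v, hfv, hle⟩ := run_bound col theTree hcol hall1 hall2 tree_ok tree_init 2000
  have hcnt : cntA col 2000 ≤ 1184 := by omega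
  rw [cnt_card] at hcnt
  set Sk : ℕ → Finset ℕ := fun k => (Finset.range 2000).filter (fun n => c n = k) with hSkdef
  have hSsub : ∀ k, ∀ x ∈ Sk k, x < 2000 := by
    intro k x hx
    exact Finset.mem_range.mp (Finset.mem_filter.mp hx).1
  have hSc : ∀ k, ∀ x ∈ Sk k, c x = k := by
    intro k x hx
    exact (Finset.mem_filter.mp hx).2
  have hhigh : ∀ k B, 5 ≤ k → k ≤ 15 → 2000 ≤ B * (7 * k - 8) → (Sk k).card ≤ B := by
    intro k B h5 h15 hB
    have hbc := block_count (ℓ := 7 * k - 8) (m := 1) (by omega) (Sk k) (hSsub k) hB ?_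
    · simpa using hbc
    · intro a
      refine window_one hp _ (fun x hx => hSc k x (Finset.mem_filter.mp hx).1)
        (a * (7 * k - 8)) (7 * k - 8) (fun x hx => (Finset.mem_filter.mp hx).2) ?_
      intro g hg1 hg2
      exact confHigh hg1 h5 (by omega) h15
  have hS5 : (Sk 5).card ≤ 75 := hhigh 5 75 (by norm_num) (by norm_num) (by norm_num)
  have hS6 : (Sk 6).card ≤ 59 := hhigh 6 59 (by norm_num) (by norm_num) (by norm_num)
  have hS7 : (Sk 7).card ≤ 49 := hhigh 7 49 (by norm_num) (by norm_num) (by norm_num)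
  have hS8 : (Sk 8).card ≤ 42 := hhigh 8 42 (by norm_num) (by norm_num) (by norm_num)
  have hS9 : (Sk 9).card ≤ 37 := hhigh 9 37 (by norm_num) (by norm_num) (by norm_num)
  have hS10 : (Sk 10).card ≤ 33 := hhigh 10 33 (by norm_num) (by norm_num) (by norm_num)
  have hS11 : (Sk 11).card ≤ 29 := hhigh 11 29 (by norm_num) (by norm_num) (by norm_num)
  have hS12 : (Sk 12).card ≤ 27 := hhigh 12 27 (by norm_num) (by norm_num) (by norm_num)
  have hS13 : (Sk 13).card ≤ 25 := hhigh 13 25 (by norm_num) (by norm_num) (by norm_num)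
  have hS14 : (Sk 14).card ≤ 23 := hhigh 14 23 (by norm_num) (by norm_num) (by norm_num)
  have hS15 : (Sk 15).card ≤ 21 := hhigh 15 21 (by norm_num) (by norm_num) (by norm_num)
  have hconf3 : ∀ g1 g2, 1 ≤ g1 → 1 ≤ g2 → g1 + g2 ≤ 18 →
      Conf g1 3 ∨ Conf g2 3 ∨ Conf (g1 + g2) 3 := by
    intro g1 g2 ha hbb hs
    have hf := fact3 g1 (Finset.mem_Icc.2 ⟨ha, by omega⟩) g2 (Finset.mem_Icc.2 ⟨hbb, by omega⟩) hs
    rcases (Bool.or_eq_true _ _).mp hf with h | h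
    · rcases (Bool.or_eq_true _ _).mp h with h' | h'
      · exact Or.inl (dok_conf h')
      · exact Or.inr (Or.inl (dok_conf h'))
    · exact Or.inr (Or.inr (dok_conf h))
  have hconf4 : ∀ g1 g2, 1 ≤ g1 → 1 ≤ g2 → g1 + g2 ≤ 25 →
      Conf g1 4 ∨ Conf g2 4 ∨ Conf (g1 + g2) 4 := by
    intro g1 g2 ha hbb hs
    have hf := fact4 g1 (Finset.mem_Icc.2 ⟨ha, by omega⟩) g2 (Finset.mem_Icc.2 ⟨hbb, by omega⟩) hs
    rcases (Bool.or_eq_true _ _).mp hf with h | h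
    · rcases (Bool.or_eq_true _ _).mp h with h' | h'
      · exact Or.inl (dok_conf h')
      · exact Or.inr (Or.inl (dok_conf h'))
    · exact Or.inr (Or.inr (dok_conf h))
  have hS3 : (Sk 3).card ≤ 212 := by
    have hbc := block_count (ℓ := 19) (m := 2) (B := 106) (by norm_num) (Sk 3) (hSsub 3)
      (by norm_num) ?_
    · omega
    · intro a
      refine window_two hp _ (fun x hx => hSc 3 x (Finset.mem_filter.mp hx).1)
        (a * 19) 19 (fun x hx => (Finset.mem_filter.mp hx).2) ?_
      intro g1 g2 h1 h2 h3
      exact hconf3 g1 g2 h1 h2 (by omega)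
  have hS4 : (Sk 4).card ≤ 154 := by
    have hbc := block_count (ℓ := 26) (m := 2) (B := 77) (by norm_num) (Sk 4) (hSsub 4)
      (by norm_num) ?_
    · omega
    · intro a
      refine window_two hp _ (fun x hx => hSc 4 x (Finset.mem_filter.mp hx).1)
        (a * 26) 26 (fun x hx => (Finset.mem_filter.mp hx).2) ?_
      intro g1 g2 h1 h2 h3
      exact hconf4 g1 g2 h1 h2 (by omega)
  have hsub : Finset.range 2000 ⊆
      ((Finset.range 2000).filter (fun m => col m ≠ 0)) ∪ (Sk 3 ∪ (Sk 4 ∪ (Sk 5 ∪ (Sk 6 ∪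
        (Sk 7 ∪ (Sk 8 ∪ (Sk 9 ∪ (Sk 10 ∪ (Sk 11 ∪ (Sk 12 ∪ (Sk 13 ∪ (Sk 14 ∪ Sk 15)))))))))))) := by
    intro n hn
    have hbn := hb n
    simp only [Sk, Finset.mem_union, Finset.mem_filter]
    by_cases h1 : c n = 1
    · exact Or.inl ⟨hn, by simp [col, h1]⟩
    by_cases h2 : c n = 2
    · exact Or.inl ⟨hn, by simp [col, h1, h2]⟩
    right
    have h3 : 3 ≤ c (n : ℤ) := by omega
    have h15 : c (n : ℤ) ≤ 15 := hbn.2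
    interval_cases hcn : (c (n : ℤ)) <;> simp [hn]
  have chain : ∀ (X Y : Finset ℕ) (x y : ℕ), X.card ≤ x → Y.card ≤ y →
      (X ∪ Y).card ≤ x + y :=
    fun X Y x y hx hy => le_trans (Finset.card_union_le X Y) (Nat.add_le_add hx hy)
  have h2000 := Finset.card_le_card hsub
  rw [Finset.card_range] at h2000
  have htot := chain _ _ _ _ hcnt (chain _ _ _ _ hS3 (chain _ _ _ _ hS4 (chain _ _ _ _ hS5
    (chain _ _ _ _ hS6 (chain _ _ _ _ hS7 (chain _ _ _ _ hS8 (chain _ _ _ _ hS9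
    (chain _ _ _ _ hS10 (chain _ _ _ _ hS11 (chain _ _ _ _ hS12 (chain _ _ _ _ hS13
    (chain _ _ _ _ hS14 hS15))))))))))))
  have := le_trans h2000 htot
  omega

end PD47

theorem packing_chromatic_D47 : 16 ≤ packingChromaticNumber (distGraph 4 7) := by
  rw [packingChromaticNumber]
  refine le_sInf ?_
  rintro q ⟨p, rfl, c, hpc⟩
  by_contra hlt
  push_neg at hlt
  have hp15 : p ≤ 15 := by
    have : (p : ℕ∞) < ((16 : ℕ) : ℕ∞) := by exact_mod_cast hlt
    have := Nat.cast_lt.mp this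
    omega
  exact PD47.main_contra c
    (fun v => ⟨(hpc.1 v).1, le_trans (hpc.1 v).2 hp15⟩) hpc.2
end

section
/- For every integer i ≥ 5, any two distinct vertices of the subgraph D_{7i−13}(2,7) of the distance graph D(2,7) induced by the vertex set {1, 2, …, 7i−13} are at distance at most i in D_{7i−13}(2,7); that is, no pair of vertices of D_{7i−13}(2,7) is at distance greater than i. -/
private lemma seg_adj (N a b : ℤ) (ha : a ∈ {z : ℤ | 1 ≤ z ∧ z ≤ N})
    (hb : b ∈ {z : ℤ | 1 ≤ z ∧ z ≤ N})
    (h : b - a = 2 ∨ b - a = 7 ∨ a - b = 2 ∨ a - b = 7) :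
    (SimpleGraph.induce {z : ℤ | 1 ≤ z ∧ z ≤ N} (distGraph 2 7)).Adj ⟨a, ha⟩ ⟨b, hb⟩ := by
  show (distGraph 2 7).Adj a b
  refine ⟨by omega, ?_⟩
  rcases h with h | h | h | h
  · left; rw [show a - b = -2 by omega]; rfl
  · right; rw [show a - b = -7 by omega]; rfl
  · left; rw [h]; rfl
  · right; rw [h]; rfl

private lemma seg_step (N a b : ℤ) (ha : a ∈ {z : ℤ | 1 ≤ z ∧ z ≤ N})
    (hb : b ∈ {z : ℤ | 1 ≤ z ∧ z ≤ N})
    (h : b - a = 2 ∨ b - a = 7 ∨ a - b = 2 ∨ a - b = 7) :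
    (SimpleGraph.induce {z : ℤ | 1 ≤ z ∧ z ≤ N} (distGraph 2 7)).edist ⟨a, ha⟩ ⟨b, hb⟩ ≤ 1 := by
  have := SimpleGraph.Walk.edist_le ((seg_adj N a b ha hb h).toWalk)
  simpa using this

private lemma seg_chain (N c : ℤ) (hc : c = 2 ∨ c = 7) :
    ∀ (m : ℕ) (a : ℤ) (ha : a ∈ {z : ℤ | 1 ≤ z ∧ z ≤ N})
      (hb : a + c * m ∈ {z : ℤ | 1 ≤ z ∧ z ≤ N}),
      (SimpleGraph.induce {z : ℤ | 1 ≤ z ∧ z ≤ N} (distGraph 2 7)).edist ⟨a, ha⟩ ⟨a + c * m, hb⟩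
        ≤ ((m : ℕ) : ℕ∞) := by
  intro m
  induction m with
  | zero =>
    intro a ha hb
    have h : (⟨a + c * ((0:ℕ):ℤ), hb⟩ : {z : ℤ | 1 ≤ z ∧ z ≤ N}) = ⟨a, ha⟩ :=
      Subtype.ext (by push_cast; ring)
    rw [h]; simp
  | succ n ih =>
    intro a ha hb
    have ha1 : 1 ≤ a := ha.1
    have hb2 : a + c * ((n:ℤ) + 1) ≤ N := by
      have := hb.2; push_cast at this; linarith
    have hcpos : (0:ℤ) < c := by rcases hc with h | h <;> omega
    have hnn : (0:ℤ) ≤ c * (n:ℤ) := by positivity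
    have hmono : c * (n:ℤ) ≤ c * ((n:ℤ) + 1) := by nlinarith [Int.natCast_nonneg n]
    have hmem : a + c * (n:ℤ) ∈ {z : ℤ | 1 ≤ z ∧ z ≤ N} := by
      simp only [Set.mem_setOf_eq]; constructor <;> linarith
    have step : (SimpleGraph.induce {z : ℤ | 1 ≤ z ∧ z ≤ N} (distGraph 2 7)).edist
        ⟨a + c * (n:ℤ), hmem⟩ ⟨a + c * ((n+1 : ℕ):ℤ), hb⟩ ≤ 1 := by
      apply seg_step
      rcases hc with h | h
      · left; subst h; push_cast; ring
      · right; left; subst h; push_cast; ring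
    calc (SimpleGraph.induce {z : ℤ | 1 ≤ z ∧ z ≤ N} (distGraph 2 7)).edist
          ⟨a, ha⟩ ⟨a + c * ((n+1 : ℕ):ℤ), hb⟩
        ≤ (SimpleGraph.induce {z : ℤ | 1 ≤ z ∧ z ≤ N} (distGraph 2 7)).edist
            ⟨a, ha⟩ ⟨a + c * (n:ℤ), hmem⟩
          + (SimpleGraph.induce {z : ℤ | 1 ≤ z ∧ z ≤ N} (distGraph 2 7)).edist
            ⟨a + c * (n:ℤ), hmem⟩ ⟨a + c * ((n+1 : ℕ):ℤ), hb⟩ := SimpleGraph.edist_triangle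
      _ ≤ ((n : ℕ) : ℕ∞) + 1 := add_le_add (ih a ha hmem) step
      _ = (((n+1 : ℕ)) : ℕ∞) := by push_cast; ring

/-- monotone path: q steps of +7 then s steps of +2 -/
private lemma seg_two_stage (N a b : ℤ) (q s : ℕ) (ha : a ∈ {z : ℤ | 1 ≤ z ∧ z ≤ N})
    (hb : b ∈ {z : ℤ | 1 ≤ z ∧ z ≤ N}) (hab : b = a + 7 * q + 2 * s) :
    (SimpleGraph.induce {z : ℤ | 1 ≤ z ∧ z ≤ N} (distGraph 2 7)).edist ⟨a, ha⟩ ⟨b, hb⟩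
      ≤ ((q + s : ℕ) : ℕ∞) := by
  have ha1 : 1 ≤ a := ha.1
  have ha2 : a ≤ N := ha.2
  have hb1 : 1 ≤ b := hb.1
  have hb2 : b ≤ N := hb.2
  have hmid : a + 7 * (q:ℤ) ∈ {z : ℤ | 1 ≤ z ∧ z ≤ N} := by
    simp only [Set.mem_setOf_eq]; omega
  have hb' : (a + 7 * (q:ℤ)) + 2 * (s:ℤ) ∈ {z : ℤ | 1 ≤ z ∧ z ≤ N} := by
    simp only [Set.mem_setOf_eq]; omega
  have heq : (⟨b, hb⟩ : {z : ℤ | 1 ≤ z ∧ z ≤ N}) = ⟨(a + 7 * (q:ℤ)) + 2 * (s:ℤ), hb'⟩ :=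
    Subtype.ext (show b = (a + 7 * (q:ℤ)) + 2 * (s:ℤ) by omega)
  rw [heq]
  calc (SimpleGraph.induce {z : ℤ | 1 ≤ z ∧ z ≤ N} (distGraph 2 7)).edist
        ⟨a, ha⟩ ⟨(a + 7 * (q:ℤ)) + 2 * (s:ℤ), hb'⟩
      ≤ (SimpleGraph.induce {z : ℤ | 1 ≤ z ∧ z ≤ N} (distGraph 2 7)).edist
          ⟨a, ha⟩ ⟨a + 7 * (q:ℤ), hmid⟩
        + (SimpleGraph.induce {z : ℤ | 1 ≤ z ∧ z ≤ N} (distGraph 2 7)).edist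
          ⟨a + 7 * (q:ℤ), hmid⟩ ⟨(a + 7 * (q:ℤ)) + 2 * (s:ℤ), hb'⟩ := SimpleGraph.edist_triangle
    _ ≤ ((q : ℕ) : ℕ∞) + ((s : ℕ) : ℕ∞) :=
        add_le_add (seg_chain N 7 (Or.inr rfl) q a ha hmid)
          (seg_chain N 2 (Or.inl rfl) s (a + 7 * (q:ℤ)) hmid hb')
    _ = ((q + s : ℕ) : ℕ∞) := by push_cast; ring

/-- q steps of +7, then t steps of -2, then one +7 -/
private lemma seg_updown (N a b : ℤ) (q t : ℕ) (htq : 2 * t ≤ 7 * q) (ht : t ≤ 3)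
    (ha : a ∈ {z : ℤ | 1 ≤ z ∧ z ≤ N}) (hb : b ∈ {z : ℤ | 1 ≤ z ∧ z ≤ N})
    (hab : b = a + 7 * q + 7 - 2 * t) :
    (SimpleGraph.induce {z : ℤ | 1 ≤ z ∧ z ≤ N} (distGraph 2 7)).edist ⟨a, ha⟩ ⟨b, hb⟩
      ≤ ((q + t + 1 : ℕ) : ℕ∞) := by
  have ha1 : 1 ≤ a := ha.1
  have ha2 : a ≤ N := ha.2
  have hb1 : 1 ≤ b := hb.1
  have hb2 : b ≤ N := hb.2
  have hm1 : a + 7 * (q:ℤ) ∈ {z : ℤ | 1 ≤ z ∧ z ≤ N} := by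
    simp only [Set.mem_setOf_eq]; omega
  have hm2 : a + 7 * (q:ℤ) - 2 * (t:ℤ) ∈ {z : ℤ | 1 ≤ z ∧ z ≤ N} := by
    simp only [Set.mem_setOf_eq]; omega
  have hG := SimpleGraph.edist_triangle
    (G := SimpleGraph.induce {z : ℤ | 1 ≤ z ∧ z ≤ N} (distGraph 2 7))
    (u := (⟨a, ha⟩ : {z : ℤ | 1 ≤ z ∧ z ≤ N})) (v := ⟨a + 7 * (q:ℤ), hm1⟩) (w := ⟨b, hb⟩)
  have hG2 := SimpleGraph.edist_triangle
    (G := SimpleGraph.induce {z : ℤ | 1 ≤ z ∧ z ≤ N} (distGraph 2 7))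
    (u := (⟨a + 7 * (q:ℤ), hm1⟩ : {z : ℤ | 1 ≤ z ∧ z ≤ N}))
    (v := ⟨a + 7 * (q:ℤ) - 2 * (t:ℤ), hm2⟩) (w := ⟨b, hb⟩)
  have h1 : (SimpleGraph.induce {z : ℤ | 1 ≤ z ∧ z ≤ N} (distGraph 2 7)).edist
      ⟨a, ha⟩ ⟨a + 7 * (q:ℤ), hm1⟩ ≤ ((q:ℕ) : ℕ∞) := seg_chain N 7 (Or.inr rfl) q a ha hm1
  have h2 : (SimpleGraph.induce {z : ℤ | 1 ≤ z ∧ z ≤ N} (distGraph 2 7)).edist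
      ⟨a + 7 * (q:ℤ), hm1⟩ ⟨a + 7 * (q:ℤ) - 2 * (t:ℤ), hm2⟩ ≤ ((t:ℕ) : ℕ∞) := by
    rw [SimpleGraph.edist_comm]
    have := seg_chain N 2 (Or.inl rfl) t (a + 7 * (q:ℤ) - 2 * (t:ℤ)) hm2
      (by rw [show a + 7 * (q:ℤ) - 2 * (t:ℤ) + 2 * (t:ℤ) = a + 7 * (q:ℤ) by ring]; exact hm1)
    convert this using 2
    ring
  have h3 : (SimpleGraph.induce {z : ℤ | 1 ≤ z ∧ z ≤ N} (distGraph 2 7)).edist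
      ⟨a + 7 * (q:ℤ) - 2 * (t:ℤ), hm2⟩ ⟨b, hb⟩ ≤ 1 := by
    apply seg_step; right; left; omega
  calc (SimpleGraph.induce {z : ℤ | 1 ≤ z ∧ z ≤ N} (distGraph 2 7)).edist ⟨a, ha⟩ ⟨b, hb⟩
      ≤ _ + _ := hG
    _ ≤ ((q:ℕ) : ℕ∞) + (((t:ℕ) : ℕ∞) + 1) := add_le_add h1 (le_trans hG2 (add_le_add h2 h3))
    _ = ((q + t + 1 : ℕ) : ℕ∞) := by push_cast; ring

/-- t steps of -2, then one +7 -/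
private lemma seg_downup (N a b : ℤ) (t : ℕ) (ht : t ≤ 3) (hlow : 1 ≤ a - 2 * t)
    (ha : a ∈ {z : ℤ | 1 ≤ z ∧ z ≤ N}) (hb : b ∈ {z : ℤ | 1 ≤ z ∧ z ≤ N})
    (hab : b = a - 2 * t + 7) :
    (SimpleGraph.induce {z : ℤ | 1 ≤ z ∧ z ≤ N} (distGraph 2 7)).edist ⟨a, ha⟩ ⟨b, hb⟩
      ≤ ((t + 1 : ℕ) : ℕ∞) := by
  have ha2 : a ≤ N := ha.2
  have hm : a - 2 * (t:ℤ) ∈ {z : ℤ | 1 ≤ z ∧ z ≤ N} := by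
    simp only [Set.mem_setOf_eq]; omega
  have h1 : (SimpleGraph.induce {z : ℤ | 1 ≤ z ∧ z ≤ N} (distGraph 2 7)).edist
      ⟨a, ha⟩ ⟨a - 2 * (t:ℤ), hm⟩ ≤ ((t:ℕ) : ℕ∞) := by
    rw [SimpleGraph.edist_comm]
    have := seg_chain N 2 (Or.inl rfl) t (a - 2 * (t:ℤ)) hm
      (by rw [show a - 2 * (t:ℤ) + 2 * (t:ℤ) = a by ring]; exact ha)
    convert this using 2
    ring
  have h2 : (SimpleGraph.induce {z : ℤ | 1 ≤ z ∧ z ≤ N} (distGraph 2 7)).edist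
      ⟨a - 2 * (t:ℤ), hm⟩ ⟨b, hb⟩ ≤ 1 := by
    apply seg_step; right; left; omega
  calc (SimpleGraph.induce {z : ℤ | 1 ≤ z ∧ z ≤ N} (distGraph 2 7)).edist ⟨a, ha⟩ ⟨b, hb⟩
      ≤ _ + _ := SimpleGraph.edist_triangle (v := ⟨a - 2 * (t:ℤ), hm⟩)
    _ ≤ ((t:ℕ) : ℕ∞) + 1 := add_le_add h1 h2
    _ = ((t + 1 : ℕ) : ℕ∞) := by push_cast; ring

/-- one +7, then t steps of -2 -/
private lemma seg_upa (N a b : ℤ) (t : ℕ) (ht : t ≤ 3) (hhigh : a + 7 ≤ N)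
    (ha : a ∈ {z : ℤ | 1 ≤ z ∧ z ≤ N}) (hb : b ∈ {z : ℤ | 1 ≤ z ∧ z ≤ N})
    (hab : b = a + 7 - 2 * t) :
    (SimpleGraph.induce {z : ℤ | 1 ≤ z ∧ z ≤ N} (distGraph 2 7)).edist ⟨a, ha⟩ ⟨b, hb⟩
      ≤ ((t + 1 : ℕ) : ℕ∞) := by
  have ha1 : 1 ≤ a := ha.1
  have hb1 : 1 ≤ b := hb.1
  have hm : a + 7 ∈ {z : ℤ | 1 ≤ z ∧ z ≤ N} := by
    simp only [Set.mem_setOf_eq]; omega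
  have h1 : (SimpleGraph.induce {z : ℤ | 1 ≤ z ∧ z ≤ N} (distGraph 2 7)).edist
      ⟨a, ha⟩ ⟨a + 7, hm⟩ ≤ 1 := by
    apply seg_step; right; left; omega
  have h2 : (SimpleGraph.induce {z : ℤ | 1 ≤ z ∧ z ≤ N} (distGraph 2 7)).edist
      ⟨a + 7, hm⟩ ⟨b, hb⟩ ≤ ((t:ℕ) : ℕ∞) := by
    rw [SimpleGraph.edist_comm]
    have hbe : b + 2 * (t:ℤ) = a + 7 := by omega
    have hm' : b + 2 * (t:ℤ) ∈ {z : ℤ | 1 ≤ z ∧ z ≤ N} := by rw [hbe]; exact hm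
    have hch := seg_chain N 2 (Or.inl rfl) t b hb hm'
    have heq : (⟨b + 2 * (t:ℤ), hm'⟩ : {z : ℤ | 1 ≤ z ∧ z ≤ N}) = ⟨a + 7, hm⟩ :=
      Subtype.ext hbe
    rwa [heq] at hch
  calc (SimpleGraph.induce {z : ℤ | 1 ≤ z ∧ z ≤ N} (distGraph 2 7)).edist ⟨a, ha⟩ ⟨b, hb⟩
      ≤ _ + _ := SimpleGraph.edist_triangle (v := ⟨a + 7, hm⟩)
    _ ≤ 1 + ((t:ℕ) : ℕ∞) := add_le_add h1 h2
    _ = ((t + 1 : ℕ) : ℕ∞) := by push_cast; ring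

private lemma seg_main (i : ℕ) (hi : 5 ≤ i) (a b : ℤ)
    (ha : a ∈ {z : ℤ | 1 ≤ z ∧ z ≤ 7 * (i : ℤ) - 13})
    (hb : b ∈ {z : ℤ | 1 ≤ z ∧ z ≤ 7 * (i : ℤ) - 13}) (hab : a < b) :
    (SimpleGraph.induce {z : ℤ | 1 ≤ z ∧ z ≤ 7 * (i : ℤ) - 13} (distGraph 2 7)).edist
      ⟨a, ha⟩ ⟨b, hb⟩ ≤ (i : ℕ∞) := by
  set N : ℤ := 7 * (i : ℤ) - 13 with hN
  have ha1 : 1 ≤ a := ha.1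
  have ha2 : a ≤ N := ha.2
  have hb1 : 1 ≤ b := hb.1
  have hb2 : b ≤ N := hb.2
  set d : ℕ := (b - a).toNat with hdd
  have hd : (d : ℤ) = b - a := Int.toNat_of_nonneg (by omega)
  set q : ℕ := d / 7 with hq
  set r : ℕ := d % 7 with hr
  have hqr : d = 7 * q + r := (Nat.div_add_mod d 7).symm
  have hr7 : r < 7 := Nat.mod_lt _ (by norm_num)
  have hdub : (d : ℤ) ≤ 7 * (i:ℤ) - 14 := by omega
  have cast_le : ∀ m : ℕ, m ≤ i → ((m : ℕ) : ℕ∞) ≤ (i : ℕ∞) := fun m hm => Nat.cast_le.mpr hm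
  have hrc : r = 0 ∨ r = 1 ∨ r = 2 ∨ r = 3 ∨ r = 4 ∨ r = 5 ∨ r = 6 := by omega
  -- small-d helper: b = a + (7 - 2*t) with t ≤ 3
  have small : ∀ t : ℕ, t ≤ 3 → b = a + 7 - 2 * t →
      (SimpleGraph.induce {z : ℤ | 1 ≤ z ∧ z ≤ N} (distGraph 2 7)).edist ⟨a, ha⟩ ⟨b, hb⟩
        ≤ (i : ℕ∞) := by
    intro t ht habt
    by_cases hc : a + 7 ≤ N
    · exact le_trans (seg_upa N a b t ht hc ha hb habt) (cast_le (t+1) (by omega))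
    · push_neg at hc
      have hN22 : (22:ℤ) ≤ N := by omega
      have hlow : 1 ≤ a - 2 * (t:ℤ) := by omega
      refine le_trans (seg_downup N a b t ht hlow ha hb (by omega)) (cast_le (t+1) (by omega))
  rcases hrc with h | h | h | h | h | h | h
  · exact le_trans (seg_two_stage N a b q 0 ha hb (by omega)) (cast_le (q+0) (by omega))
  · rcases Nat.eq_zero_or_pos q with hq0 | hq1
    · exact small 3 (by norm_num) (by omega)
    · exact le_trans (seg_two_stage N a b (q-1) 4 ha hb (by omega)) (cast_le (q-1+4) (by omega))
  · exact le_trans (seg_two_stage N a b q 1 ha hb (by omega)) (cast_le (q+1) (by omega))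
  · rcases Nat.eq_zero_or_pos q with hq0 | hq1
    · exact small 2 (by norm_num) (by omega)
    · exact le_trans (seg_updown N a b q 2 (by omega) (by norm_num) ha hb (by omega))
        (cast_le (q+2+1) (by omega))
  · exact le_trans (seg_two_stage N a b q 2 ha hb (by omega)) (cast_le (q+2) (by omega))
  · rcases Nat.eq_zero_or_pos q with hq0 | hq1
    · exact small 1 (by norm_num) (by omega)
    · exact le_trans (seg_updown N a b q 1 (by omega) (by norm_num) ha hb (by omega))
        (cast_le (q+1+1) (by omega))
  · exact le_trans (seg_two_stage N a b q 3 ha hb (by omega)) (cast_le (q+3) (by omega))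

theorem D27_segment_diameter (i : ℕ) (hi : 5 ≤ i) :
    ∀ u v : ({z : ℤ | 1 ≤ z ∧ z ≤ 7 * (i : ℤ) - 13} : Set ℤ), u ≠ v →
      (SimpleGraph.induce {z : ℤ | 1 ≤ z ∧ z ≤ 7 * (i : ℤ) - 13} (distGraph 2 7)).edist u v
        ≤ (i : ℕ∞) := by
  rintro ⟨a, ha⟩ ⟨b, hb⟩ hne
  have hab : a ≠ b := fun h => hne (Subtype.ext h)
  rcases lt_or_gt_of_ne hab with h | h
  · exact seg_main i hi a b ha hb h
  · rw [SimpleGraph.edist_comm]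
    exact seg_main i hi b a hb ha h
end
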